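/- arXiv:1301.0252 — 8 statements merged into one kernel-verified Lean document; each statement's English description precedes it below -/
import Mathlib

section
/- For every prime p and nonnegative integers n, m, n₀, m₀ with n₀ < p and m₀ < p, the binomial coefficient C(n·p + n₀, m·p + m₀) is congruent to C(n,m)·C(n₀,m₀) modulo p. -/
theorem stmt0 (p : ℕ) (hp : p.Prime) (n m n0 m0 : ℕ) (hn0 : n0 < p) (hm0 : m0 < p) :
    (n * p + n0).choose (m * p + m0) ≡ n.choose m * n0.choose m0 [MOD p] := by
  haveI : Fact p.Prime := ⟨hp⟩
  have h := Choose.choose_modEq_choose_mod_mul_choose_div_nat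
    (p := p) (n := n * p + n0) (k := m * p + m0)
  have hp0 : 0 < p := hp.pos

  simpa [Nat.add_mul_mod_self_left, Nat.mul_add_mod, Nat.mod_eq_of_lt hn0, Nat.mod_eq_of_lt hm0,
    Nat.add_mul_div_right _ _ hp0, Nat.mul_add_div hp0, Nat.div_eq_of_lt hn0, Nat.div_eq_of_lt hm0,
    Nat.mul_div_cancel _ hp0, mul_comm] using h
end

section
/- For every prime p and nonnegative integers n, m, n₀, m₀ with n₀ < p and m₀ < p, the binomial coefficient C(n·p² + n₀, m·p² + m₀) is congruent to C(n,m)·C(n₀,m₀) modulo p². -/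
open Nat Finset

private lemma dvd_mul_choose' (N j : ℕ) : N ∣ j * N.choose j := by
  rcases N with _ | N
  · rcases j with _ | j <;> simp
  rcases j with _ | j
  · simp
  · refine ⟨N.choose j, ?_⟩
    have h := Nat.add_one_mul_choose_eq N j
    rw [h]; ring

private lemma L1 {p : ℕ} (hp : p.Prime) {j : ℕ} (hj : ¬ p ∣ j) :
    p ^ 2 ∣ (p ^ 2).choose j := by
  have h : p ^ 2 ∣ (p ^ 2).choose j * j := by
    rw [mul_comm]; exact dvd_mul_choose' (p ^ 2) j
  exact (Nat.Coprime.pow_left 2 (hp.coprime_iff_not_dvd.mpr hj)).dvd_of_dvd_mul_right h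

private lemma L2 {p : ℕ} (hp : p.Prime) {j : ℕ} (hj : 0 < j) (hj2 : j < p ^ 2) :
    p ∣ (p ^ 2).choose j := by
  by_cases hpj : p ∣ j
  · obtain ⟨k, rfl⟩ := hpj
    have h := dvd_mul_choose' (p ^ 2) (p * k)
    have h2 : p ∣ k * (p ^ 2).choose (p * k) := by
      have h3 : p * p ∣ p * (k * (p ^ 2).choose (p * k)) := by
        rw [← mul_assoc, ← pow_two]; exact h
      exact (Nat.mul_dvd_mul_iff_left hp.pos).mp h3
    have hk : ¬ p ∣ k := by
      intro hd
      obtain ⟨l, rfl⟩ := hd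
      have : 0 < l := by
        rcases Nat.eq_zero_or_pos l with h | h
        · subst h; simp at hj
        · exact h
      nlinarith [hp.two_le]
    exact (hp.coprime_iff_not_dvd.mpr hk).dvd_of_dvd_mul_left h2
  · exact dvd_trans (dvd_pow_self p two_ne_zero) (L1 hp hpj)

private lemma L3 {p : ℕ} (hp : p.Prime) {n n0 j : ℕ} (hn0 : n0 < p)
    (hj : j / p % p ≠ 0) : p ∣ (n * p ^ 2 + n0).choose j := by
  haveI : Fact p.Prime := ⟨hp⟩
  have e1 : (n * p ^ 2 + n0) / p = n * p := by
    have e : n * p ^ 2 + n0 = p * (n * p) + n0 := by ring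
    rw [e, Nat.mul_add_div hp.pos, Nat.div_eq_of_lt hn0, add_zero]
  have e2 : (n * p ^ 2 + n0) % p = n0 := by
    have e : n * p ^ 2 + n0 = n0 + (n * p) * p := by ring
    rw [e, Nat.add_mul_mod_self_right, Nat.mod_eq_of_lt hn0]
  have h2 : (n * p).choose (j / p) ≡ 0 [MOD p] := by
    have h := Choose.choose_modEq_choose_mod_mul_choose_div_nat
      (p := p) (n := n * p) (k := j / p)
    simpa [Nat.mul_mod_left, Nat.choose_eq_zero_of_lt (Nat.pos_of_ne_zero hj)] using h
  have h1 := Choose.choose_modEq_choose_mod_mul_choose_div_nat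
    (p := p) (n := n * p ^ 2 + n0) (k := j)
  rw [e1, e2] at h1
  have := h1.trans (Nat.ModEq.mul_left (n0.choose (j % p)) h2)
  simpa [Nat.modEq_zero_iff_dvd] using this

private lemma main_lemma {p : ℕ} (hp : p.Prime) {n0 m0 : ℕ} (hn0 : n0 < p) (hm0 : m0 < p) :
    ∀ n m : ℕ, ((n * p ^ 2 + n0).choose (m * p ^ 2 + m0) : ZMod (p ^ 2))
      = (n.choose m : ZMod (p ^ 2)) * (n0.choose m0 : ZMod (p ^ 2)) := by
  intro n
  induction n with
  | zero =>
    intro m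
    cases m with
    | zero => simp
    | succ m =>
      have hlt : n0 < (m + 1) * p ^ 2 + m0 := by nlinarith [hp.two_le]
      simp [Nat.choose_eq_zero_of_lt hlt, Nat.choose_eq_zero_of_lt (Nat.succ_pos m)]
  | succ n ih =>
    intro m
    have key : (n + 1) * p ^ 2 + n0 = p ^ 2 + (n * p ^ 2 + n0) := by ring
    rw [key, Nat.add_choose_eq]
    push_cast
    cases m with
    | zero =>
      rw [← Finset.sum_subset (s₁ := {((0 : ℕ), 0 * p ^ 2 + m0)})
        (by intro x hx; simp at hx; subst hx; simp)
        (by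
          intro ij hij hnotin
          rw [Finset.HasAntidiagonal.mem_antidiagonal] at hij
          have hi : ij.1 ≠ 0 := by
            intro h0
            apply hnotin
            simp only [Finset.mem_singleton]
            have : ij.2 = 0 * p ^ 2 + m0 := by omega
            exact Prod.ext h0 this
          have hip : ¬ p ∣ ij.1 := by
            apply Nat.not_dvd_of_pos_of_lt (Nat.pos_of_ne_zero hi)
            omega
          have : ((p ^ 2).choose ij.1 : ZMod (p ^ 2)) = 0 := by
            rw [ZMod.natCast_eq_zero_iff]
            exact L1 hp hip
          rw [this, zero_mul])]
      rw [Finset.sum_singleton, Nat.choose_zero_right, Nat.choose_zero_right, ih 0]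
      simp
    | succ m =>
      have hpne : (0, (m + 1) * p ^ 2 + m0) ≠ ((p ^ 2 : ℕ), m * p ^ 2 + m0) := by
        intro h
        have := congrArg Prod.fst h
        simp at this
        exact hp.pos.ne' (by nlinarith [this])
      rw [← Finset.sum_subset
        (s₁ := {((0 : ℕ), (m + 1) * p ^ 2 + m0), ((p ^ 2 : ℕ), m * p ^ 2 + m0)})
        (by
          intro x hx
          simp only [Finset.mem_insert, Finset.mem_singleton] at hx
          rcases hx with h | h <;> subst h <;>
            · rw [Finset.HasAntidiagonal.mem_antidiagonal]; ring)
        (by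
          intro ij hij hnotin
          rw [Finset.HasAntidiagonal.mem_antidiagonal] at hij
          simp only [Finset.mem_insert, Finset.mem_singleton] at hnotin
          push_neg at hnotin
          obtain ⟨h1, h2⟩ := hnotin
          have hi : ij.1 ≠ 0 := by
            intro h0
            exact h1 (Prod.ext h0 (by omega))
          have hi2 : ij.1 ≠ p ^ 2 := by
            intro h0
            apply h2
            apply Prod.ext h0
            have hle : (m + 1) * p ^ 2 = m * p ^ 2 + p ^ 2 := by ring
            omega
          by_cases hbig : p ^ 2 < ij.1
          · rw [Nat.choose_eq_zero_of_lt hbig]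
            push_cast
            ring
          · push_neg at hbig
            have hlt : ij.1 < p ^ 2 := lt_of_le_of_ne hbig hi2
            by_cases hpd : p ∣ ij.1
            · obtain ⟨k, hk⟩ := hpd
              have hk1 : 1 ≤ k := by
                rcases Nat.eq_zero_or_pos k with h | h
                · exfalso; apply hi; rw [hk, h, mul_zero]
                · exact h
              have hkp : k < p := by nlinarith
              -- ij.2 = (m * p + (p - k)) * p + m0
              have ht : (p - k) + k = p := Nat.sub_add_cancel (le_of_lt hkp)
              have hj' : (m * p + (p - k)) * p + m0 + p * k = (m + 1) * p ^ 2 + m0 := by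
                have hh : (m * p + (p - k)) * p + m0 + p * k
                    = m * p * p + ((p - k) + k) * p + m0 := by ring
                rw [hh, ht]; ring
              have hjeq : ij.2 = (m * p + (p - k)) * p + m0 := by
                have hadd : p * k + ij.2 = (m + 1) * p ^ 2 + m0 := by rw [← hk]; exact hij
                have := hj'.trans hadd.symm
                omega
              have hdivmod : ij.2 / p % p = p - k := by
                have e : ij.2 = p * (m * p + (p - k)) + m0 := by rw [hjeq]; ring
                rw [e, Nat.mul_add_div hp.pos, Nat.div_eq_of_lt hm0, add_zero]
                have e2 : m * p + (p - k) = p - k + m * p := by ring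
                rw [e2, Nat.add_mul_mod_self_right, Nat.mod_eq_of_lt (by omega)]
              have hd1 : p ∣ (p ^ 2).choose ij.1 := L2 hp (Nat.pos_of_ne_zero hi) hlt
              have hd2 : p ∣ (n * p ^ 2 + n0).choose ij.2 := by
                apply L3 hp hn0
                rw [hdivmod]
                omega
              have : ((p ^ 2).choose ij.1 * (n * p ^ 2 + n0).choose ij.2 : ZMod (p ^ 2)) = 0 := by
                rw [← Nat.cast_mul, ZMod.natCast_eq_zero_iff]
                have hdd : p * p ∣ (p ^ 2).choose ij.1 * (n * p ^ 2 + n0).choose ij.2 :=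
                  mul_dvd_mul hd1 hd2
                simpa [pow_two] using hdd
              exact this
            · have : ((p ^ 2).choose ij.1 : ZMod (p ^ 2)) = 0 := by
                rw [ZMod.natCast_eq_zero_iff]
                exact L1 hp hpd
              rw [this, zero_mul])]
      rw [Finset.sum_pair hpne, Nat.choose_zero_right, Nat.choose_self,
        ih (m + 1), ih m]
      have hpascal : (n + 1).choose (m + 1) = n.choose m + n.choose (m + 1) :=
        Nat.choose_succ_succ n m
      rw [hpascal]
      push_cast
      ring

theorem stmt1 (p : ℕ) (hp : p.Prime) (n m n0 m0 : ℕ) (hn0 : n0 < p) (hm0 : m0 < p) :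
    (n * p ^ 2 + n0).choose (m * p ^ 2 + m0) ≡ n.choose m * n0.choose m0 [MOD p ^ 2] := by
  rw [← ZMod.natCast_eq_natCast_iff]
  push_cast
  exact main_lemma hp hn0 hm0 n m
end

section
/- For every prime p ≥ 5 and nonnegative integers n, m, n₀, m₀ with n₀ < p and m₀ < p, the binomial coefficient C(n·p³ + n₀, m·p³ + m₀) is congruent to C(n,m)·C(n₀,m₀) modulo p³. -/
open Finset




lemma prod_add_sqzero {R : Type*} [CommRing R] (c : R) (hc : c * c = 0)
    (s : Finset ℕ) (a : ℕ → R) :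
    ∏ r ∈ s, (a r + c) = (∏ r ∈ s, a r) + c * ∑ r ∈ s, ∏ t ∈ s.erase r, a t := by
  classical
  induction s using Finset.induction_on with
  | empty => simp
  | @insert x s hx ih =>
    rw [Finset.prod_insert hx, ih, Finset.prod_insert hx]
    have h1 : ∑ r ∈ insert x s, ∏ t ∈ (insert x s).erase r, a t
        = (∏ t ∈ s, a t) + ∑ r ∈ s, a x * ∏ t ∈ s.erase r, a t := by
      rw [Finset.sum_insert hx, Finset.erase_insert hx]
      congr 1
      refine Finset.sum_congr rfl fun r hr => ?_
      rw [Finset.erase_insert_of_ne (fun h : x = r => hx (h ▸ hr)),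
        Finset.prod_insert (fun h => hx (Finset.mem_of_mem_erase h))]
    rw [h1, ← Finset.mul_sum]
    linear_combination (∑ r ∈ s, ∏ t ∈ s.erase r, a t) * hc

lemma sum_range_zmod (p : ℕ) [NeZero p] {M : Type*} [AddCommMonoid M] (F : ZMod p → M) :
    ∑ r ∈ Finset.range p, F (r : ZMod p) = ∑ x : ZMod p, F x := by
  refine Finset.sum_nbij' (fun r => (r : ZMod p)) (fun x => x.val) ?_ ?_ ?_ ?_ ?_
  · intro a _; exact Finset.mem_univ _
  · intro x _; exact Finset.mem_range.mpr (ZMod.val_lt x)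
  · intro a ha; exact ZMod.val_cast_of_lt (Finset.mem_range.mp ha)
  · intro x _; exact ZMod.natCast_rightInverse x
  · intro a _; rfl

lemma sum_sq_zmod (p : ℕ) [NeZero p] (hp : p.Prime) (hp5 : 5 ≤ p) : ∑ x : ZMod p, x ^ 2 = 0 := by
  haveI := Fact.mk hp
  have hnd : ∀ k : ℕ, 0 < k → k < p → ((k : ZMod p) ≠ 0) := by
    intro k hk hkp h
    rw [ZMod.natCast_eq_zero_iff] at h
    have := Nat.le_of_dvd hk h; omega
  have h2 : (2 : ZMod p) ≠ 0 := by
    have := hnd 2 (by norm_num) (by omega); simpa using this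
  have h3 : (3 : ZMod p) ≠ 0 := by
    have := hnd 3 (by norm_num) (by omega); simpa using this
  have key : ∑ x : ZMod p, (2 * x) ^ 2 = ∑ x : ZMod p, x ^ 2 :=
    Equiv.sum_comp (Equiv.mulLeft₀ (2 : ZMod p) h2) (fun x => x ^ 2)
  have key2 : ∑ x : ZMod p, (2 * x) ^ 2 = 4 * ∑ x : ZMod p, x ^ 2 := by
    rw [Finset.mul_sum]; exact Finset.sum_congr rfl fun x _ => by ring
  have : (3 : ZMod p) * ∑ x : ZMod p, x ^ 2 = 0 := by linear_combination key - key2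
  exact (mul_eq_zero.mp this).resolve_left h3

lemma sum_inv_neg_sq_zmod (p : ℕ) (hp : p.Prime) (hp5 : 5 ≤ p) :
    ∑ r ∈ Finset.Ico 1 p, (-(r : ZMod p) ^ 2)⁻¹ = 0 := by
  haveI := Fact.mk hp
  haveI : NeZero p := ⟨by omega⟩
  have h0 : ∑ r ∈ Finset.range p, (-((r : ℕ) : ZMod p) ^ 2)⁻¹
      = ∑ r ∈ Finset.Ico 1 p, (-((r : ℕ) : ZMod p) ^ 2)⁻¹ := by
    rw [Finset.range_eq_Ico, Finset.sum_eq_sum_Ico_succ_bot (by omega : 0 < p)]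
    simp
  rw [← h0, sum_range_zmod p (fun x => (-x ^ 2)⁻¹)]
  have e1 : ∑ x : ZMod p, (-x ^ 2)⁻¹ = -∑ x : ZMod p, (x⁻¹) ^ 2 := by
    rw [← Finset.sum_neg_distrib]
    refine Finset.sum_congr rfl fun x _ => by rw [inv_neg, inv_pow]
  have e2 : ∑ x : ZMod p, (x⁻¹) ^ 2 = ∑ x : ZMod p, x ^ 2 :=
    Equiv.sum_comp (⟨Inv.inv, Inv.inv, inv_inv, inv_inv⟩ : ZMod p ≃ ZMod p) (fun x => x ^ 2)
  rw [e1, e2, sum_sq_zmod p hp hp5, neg_zero]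





lemma nat_unit_zmod (p : ℕ) (hp : p.Prime) (a : ℕ) (ha : ¬ p ∣ a) :
    IsUnit ((a : ℕ) : ZMod (p^3)) := by
  rw [ZMod.isUnit_iff_coprime]
  exact ((Nat.Prime.coprime_iff_not_dvd hp).mpr ha).symm.pow_right 3

lemma unit_of_phi (p : ℕ) (hp : p.Prime) (x : ZMod (p^3))
    (h : ZMod.castHom (dvd_pow_self p (by norm_num : (3:ℕ) ≠ 0)) (ZMod p) x ≠ 0) : IsUnit x := by
  haveI : NeZero (p^3) := ⟨pow_ne_zero 3 hp.pos.ne'⟩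
  have hx : ((x.val : ℕ) : ZMod (p^3)) = x := ZMod.natCast_rightInverse x
  rw [← hx]
  apply nat_unit_zmod p hp
  intro hd
  apply h
  rw [← hx, map_natCast]
  exact (ZMod.natCast_eq_zero_iff _ _).mpr hd

lemma p2_mul_zero (p : ℕ) (hp : p.Prime) (x : ZMod (p^3))
    (h : ZMod.castHom (dvd_pow_self p (by norm_num : (3:ℕ) ≠ 0)) (ZMod p) x = 0) :
    (p : ZMod (p^3))^2 * x = 0 := by
  haveI : NeZero (p^3) := ⟨pow_ne_zero 3 hp.pos.ne'⟩
  have hx : ((x.val : ℕ) : ZMod (p^3)) = x := ZMod.natCast_rightInverse x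
  have hd : p ∣ x.val := by
    rw [← ZMod.natCast_eq_zero_iff x.val p]
    have : ZMod.castHom (dvd_pow_self p (by norm_num : (3:ℕ) ≠ 0)) (ZMod p) ((x.val : ℕ) : ZMod (p^3))
        = ((x.val : ℕ) : ZMod p) := map_natCast _ _
    rw [← this, hx, h]
  obtain ⟨t, ht⟩ := hd
  calc (p : ZMod (p^3))^2 * x = (p : ZMod (p^3))^2 * ((p*t : ℕ) : ZMod (p^3)) := by rw [← hx, ht]
    _ = (((p^3 : ℕ) : ZMod (p^3))) * (t : ZMod (p^3)) := by push_cast; ring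
    _ = 0 := by rw [ZMod.natCast_self, zero_mul]

lemma block (p : ℕ) (hp : p.Prime) (hp5 : 5 ≤ p) (i : ℕ) :
    ((∏ r ∈ Finset.Ico 1 p, (i * p + r) : ℕ) : ZMod (p^3))
      = ((p-1).factorial : ZMod (p^3)) := by
  haveI := Fact.mk hp
  haveI : NeZero p := ⟨by omega⟩
  haveI : NeZero (p^3) := ⟨pow_ne_zero 3 hp.pos.ne'⟩
  set φ : ZMod (p^3) →+* ZMod p :=
    ZMod.castHom (dvd_pow_self p (by norm_num : (3:ℕ) ≠ 0)) (ZMod p) with hφ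
  set f : ℕ → ZMod (p^3) := fun r => ((i * p + r : ℕ) : ZMod (p^3)) with hf
  set a : ℕ → ZMod (p^3) := fun r => ((r * (p - r) : ℕ) : ZMod (p^3)) with ha
  set c : ZMod (p^3) := ((i^2 + i : ℕ) : ZMod (p^3)) * (p : ZMod (p^3))^2 with hc
  set W : ZMod (p^3) := ((p-1).factorial : ZMod (p^3)) with hW
  set P : ZMod (p^3) := ((∏ r ∈ Finset.Ico 1 p, (i * p + r) : ℕ) : ZMod (p^3)) with hP
  have hPf : P = ∏ r ∈ Finset.Ico 1 p, f r := by rw [hP, Nat.cast_prod]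
  have hp3cast : ((p : ZMod (p^3)))^3 = 0 := by
    have h0 : (((p^3 : ℕ)) : ZMod (p^3)) = 0 := ZMod.natCast_self _
    push_cast at h0
    exact h0
  have hc2 : c * c = 0 := by
    calc c * c = (((i^2 + i : ℕ)) : ZMod (p^3))^2 * (p : ZMod (p^3)) * ((p : ZMod (p^3)))^3 := by
          rw [hc]; ring
      _ = 0 := by rw [hp3cast, mul_zero]
  have hrefl : ∏ r ∈ Finset.Ico 1 p, f (p - r) = ∏ r ∈ Finset.Ico 1 p, f r := by
    have h := Finset.prod_Ico_reflect f 1 (show p ≤ p + 1 by omega)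
    simpa using h
  have hpair : ∀ r ∈ Finset.Ico 1 p, f r * f (p - r) = a r + c := by
    intro r hr
    obtain ⟨hr1, hr2⟩ := Finset.mem_Ico.mp hr
    have hrle : r ≤ p := le_of_lt hr2
    rw [hf, ha, hc]
    push_cast [Nat.cast_sub hrle]
    ring
  have hexp := prod_add_sqzero c hc2 (Finset.Ico 1 p) a
  have hPP : P * P = (∏ r ∈ Finset.Ico 1 p, a r)
      + c * ∑ r ∈ Finset.Ico 1 p, ∏ t ∈ (Finset.Ico 1 p).erase r, a t := by
    calc P * P = (∏ r ∈ Finset.Ico 1 p, f r) * ∏ r ∈ Finset.Ico 1 p, f (p - r) := by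
          rw [hrefl, hPf]
      _ = ∏ r ∈ Finset.Ico 1 p, (f r * f (p - r)) := (Finset.prod_mul_distrib).symm
      _ = ∏ r ∈ Finset.Ico 1 p, (a r + c) := Finset.prod_congr rfl hpair
      _ = _ := hexp
  -- product of a's is W * W
  have hfac : ∏ r ∈ Finset.Ico 1 p, r = (p-1).factorial := by
    have h := Finset.prod_Ico_id_eq_factorial (p-1)
    have h1 : p - 1 + 1 = p := by omega
    rw [h1] at h
    exact h
  have hfacrefl : ∏ r ∈ Finset.Ico 1 p, (p - r) = (p-1).factorial := by
    have h := Finset.prod_Ico_reflect (fun x => x) 1 (show p ≤ p + 1 by omega)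
    simpa [hfac] using h
  have hprodA : ∏ r ∈ Finset.Ico 1 p, a r = W * W := by
    rw [ha, hW, ← Nat.cast_prod]
    have : ∏ r ∈ Finset.Ico 1 p, (r * (p - r)) = (p-1).factorial * (p-1).factorial := by
      rw [Finset.prod_mul_distrib, hfac, hfacrefl]
    rw [this, Nat.cast_mul]
  -- the correction term vanishes
  have hcT : c * ∑ r ∈ Finset.Ico 1 p, ∏ t ∈ (Finset.Ico 1 p).erase r, a t = 0 := by
    set T : ZMod (p^3) := ∑ r ∈ Finset.Ico 1 p, ∏ t ∈ (Finset.Ico 1 p).erase r, a t with hT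
    set b : ℕ → ZMod p := fun t => -((t : ZMod p))^2 with hb
    have hbne : ∀ t ∈ Finset.Ico 1 p, b t ≠ 0 := by
      intro t ht
      obtain ⟨ht1, ht2⟩ := Finset.mem_Ico.mp ht
      have : ((t : ℕ) : ZMod p) ≠ 0 := by
        rw [Ne, ZMod.natCast_eq_zero_iff]
        intro hd
        have := Nat.le_of_dvd (by omega) hd
        omega
      simp [hb, pow_eq_zero_iff, this]
    have hφa : ∀ t ∈ Finset.Ico 1 p, φ (a t) = b t := by
      intro t ht
      obtain ⟨ht1, ht2⟩ := Finset.mem_Ico.mp ht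
      rw [ha, hb]
      simp only [map_natCast]
      push_cast [Nat.cast_sub (le_of_lt ht2)]
      rw [ZMod.natCast_self]
      ring
    have hφT : φ T = 0 := by
      rw [hT, map_sum]
      have h1 : ∀ r ∈ Finset.Ico 1 p, φ (∏ t ∈ (Finset.Ico 1 p).erase r, a t)
          = (∏ t ∈ Finset.Ico 1 p, b t) * (b r)⁻¹ := by
        intro r hr
        rw [map_prod]
        have h2 : ∏ t ∈ (Finset.Ico 1 p).erase r, φ (a t)
            = ∏ t ∈ (Finset.Ico 1 p).erase r, b t :=
          Finset.prod_congr rfl fun t ht => hφa t (Finset.mem_of_mem_erase ht)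
        rw [h2, eq_mul_inv_iff_mul_eq₀ (hbne r hr)]
        exact Finset.prod_erase_mul _ _ hr
      rw [Finset.sum_congr rfl h1, ← Finset.mul_sum]
      have h3 : ∑ r ∈ Finset.Ico 1 p, (b r)⁻¹ = 0 := by
        simpa [hb] using sum_inv_neg_sq_zmod p hp hp5
      rw [h3, mul_zero]
    have h4 := p2_mul_zero p hp T hφT
    calc c * T = ((i^2 + i : ℕ) : ZMod (p^3)) * ((p : ZMod (p^3))^2 * T) := by rw [hc]; ring
      _ = 0 := by rw [h4, mul_zero]
  have hsq : P * P = W * W := by rw [hPP, hprodA, hcT, add_zero]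
  -- P + W is a unit
  have hfnz : ¬ p ∣ (p-1).factorial := by
    intro hd
    have := (Nat.Prime.dvd_factorial hp).mp hd
    omega
  have hWp : ((p-1).factorial : ZMod p) ≠ 0 := by
    rw [Ne, ZMod.natCast_eq_zero_iff]
    exact hfnz
  have hφP : φ P = ((p-1).factorial : ZMod p) := by
    rw [hP, map_natCast, Nat.cast_prod]
    have h5 : ∀ r ∈ Finset.Ico 1 p, ((i * p + r : ℕ) : ZMod p) = (r : ZMod p) := by
      intro r _
      push_cast
      rw [ZMod.natCast_self]
      ring
    rw [Finset.prod_congr rfl h5, ← Nat.cast_prod, hfac]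
  have hφW : φ W = ((p-1).factorial : ZMod p) := by rw [hW, map_natCast]
  have h2ne : (2 : ZMod p) ≠ 0 := by
    have : ((2 : ℕ) : ZMod p) ≠ 0 := by
      rw [Ne, ZMod.natCast_eq_zero_iff]
      intro hd
      have := Nat.le_of_dvd (by norm_num) hd
      omega
    simpa using this
  have hunit : IsUnit (P + W) := by
    apply unit_of_phi p hp
    rw [map_add, hφP, hφW]
    intro h
    have : (2 : ZMod p) * ((p-1).factorial : ZMod p) = 0 := by linear_combination h
    rcases mul_eq_zero.mp this with h' | h'
    · exact h2ne h'
    · exact hWp h'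
  have hdiff : (P - W) * (P + W) = 0 := by linear_combination hsq
  obtain ⟨u, hu⟩ := hunit
  have h1 : (P + W) * ↑u⁻¹ = 1 := by rw [← hu]; exact u.mul_inv
  have h2 : P - W = 0 := by
    calc P - W = (P - W) * ((P + W) * ↑u⁻¹) := by rw [h1, mul_one]
      _ = ((P - W) * (P + W)) * ↑u⁻¹ := by ring
      _ = 0 := by rw [hdiff, zero_mul]
  exact sub_eq_zero.mp h2





lemma fact_add (n : ℕ) : ∀ k : ℕ, (n + k).factorial
    = n.factorial * ∏ r ∈ Finset.Ico 1 (k+1), (n + r) := by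
  intro k
  induction k with
  | zero => simp
  | succ k ih =>
    rw [show n + (k+1) = (n + k) + 1 by ring, Nat.factorial_succ, ih,
      Finset.prod_Ico_succ_top (by omega : 1 ≤ k + 1)]
    ring

lemma fact_split (p : ℕ) (hpos : 0 < p) (a : ℕ) :
    (a * p).factorial = p ^ a * a.factorial
      * ∏ i ∈ Finset.range a, ∏ r ∈ Finset.Ico 1 p, (i * p + r) := by
  induction a with
  | zero => simp
  | succ a ih =>
    have h1 : (a + 1) * p = a * p + p := by ring
    rw [h1, fact_add (a * p) p, ih,
      show p + 1 = (p - 1 + 1) + 1 by omega,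
      Finset.prod_Ico_succ_top (by omega : 1 ≤ p - 1 + 1),
      show p - 1 + 1 = p by omega, Finset.prod_range_succ,
      Nat.factorial_succ, pow_succ,
      show a * p + p = (a+1) * p by ring]
    ring

lemma jacobsthal (p : ℕ) (hp : p.Prime) (hp5 : 5 ≤ p) (n m : ℕ) :
    (((n * p).choose (m * p) : ℕ) : ZMod (p^3)) = ((n.choose m : ℕ) : ZMod (p^3)) := by
  rcases lt_or_ge n m with h | h
  · rw [Nat.choose_eq_zero_of_lt h,
      Nat.choose_eq_zero_of_lt (by have := hp.pos; exact (Nat.mul_lt_mul_right this).mpr h)]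
  -- m ≤ n
  set G : ℕ → ℕ := fun a => ∏ i ∈ Finset.range a, ∏ r ∈ Finset.Ico 1 p, (i * p + r) with hG
  have hGW : ∀ a : ℕ, ((G a : ℕ) : ZMod (p^3)) = ((p-1).factorial : ZMod (p^3)) ^ a := by
    intro a
    rw [hG, Nat.cast_prod]
    rw [Finset.prod_congr rfl (fun i _ => block p hp hp5 i), Finset.prod_const, Finset.card_range]
  have hmp : m * p ≤ n * p := Nat.mul_le_mul_right p h
  have e1 : (n * p).choose (m * p) * (m * p).factorial * (n * p - m * p).factorial
      = (n * p).factorial := Nat.choose_mul_factorial_mul_factorial hmp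
  have hsub : n * p - m * p = (n - m) * p := by rw [Nat.sub_mul]
  rw [hsub] at e1
  rw [fact_split p hp.pos m, fact_split p hp.pos (n - m), fact_split p hp.pos n] at e1
  have e3 : n.factorial = n.choose m * m.factorial * (n - m).factorial :=
    (Nat.choose_mul_factorial_mul_factorial h).symm
  rw [e3] at e1
  -- move to ℤ
  have e1' : ((n * p).choose (m * p) : ℤ) * ((p:ℤ) ^ m * (m.factorial : ℤ) * (G m : ℤ))
      * ((p:ℤ) ^ (n - m) * ((n - m).factorial : ℤ) * (G (n - m) : ℤ))
      = (p:ℤ) ^ n * ((n.choose m : ℤ) * (m.factorial : ℤ) * ((n - m).factorial : ℤ)) * (G n : ℤ) := by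
    exact_mod_cast congrArg (Nat.cast : ℕ → ℤ) e1
  have hq : (p:ℤ) ^ n = (p:ℤ) ^ m * (p:ℤ) ^ (n - m) := by
    rw [← pow_add]
    congr 1
    omega
  rw [hq] at e1'
  have hK : ((p:ℤ) ^ m * (p:ℤ) ^ (n - m) * (m.factorial : ℤ) * ((n - m).factorial : ℤ)) ≠ 0 := by
    have := hp.pos
    positivity
  have e2 : ((n * p).choose (m * p) : ℤ) * ((G m : ℤ) * (G (n - m) : ℤ))
      = (n.choose m : ℤ) * (G n : ℤ) := by
    have h0 : ((p:ℤ) ^ m * (p:ℤ) ^ (n - m) * (m.factorial : ℤ) * ((n - m).factorial : ℤ))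
        * (((n * p).choose (m * p) : ℤ) * ((G m : ℤ) * (G (n - m) : ℤ))
          - (n.choose m : ℤ) * (G n : ℤ)) = 0 := by linear_combination e1'
    rcases mul_eq_zero.mp h0 with h' | h'
    · exact absurd h' hK
    · linarith [h']
  -- cast to ZMod (p^3)
  have e4 : (((n * p).choose (m * p) : ℕ) : ZMod (p^3)) * (((G m : ℕ) : ZMod (p^3)) * ((G (n-m) : ℕ) : ZMod (p^3)))
      = ((n.choose m : ℕ) : ZMod (p^3)) * ((G n : ℕ) : ZMod (p^3)) := by
    have := congrArg (Int.cast : ℤ → ZMod (p^3)) e2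
    push_cast at this ⊢
    exact_mod_cast this
  rw [hGW, hGW, hGW] at e4
  have hWn : (((p-1).factorial : ZMod (p^3))) ^ m * (((p-1).factorial : ZMod (p^3))) ^ (n - m)
      = (((p-1).factorial : ZMod (p^3))) ^ n := by
    rw [← pow_add]
    congr 1
    omega
  rw [hWn] at e4
  have hfnz : ¬ p ∣ (p-1).factorial := by
    intro hd
    have := (Nat.Prime.dvd_factorial hp).mp hd
    omega
  have hunit : IsUnit ((((p-1).factorial : ℕ) : ZMod (p^3)) ^ n) :=
    (nat_unit_zmod p hp _ hfnz).pow n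
  obtain ⟨u, hu⟩ := hunit
  have h1 : ((((p-1).factorial : ℕ) : ZMod (p^3)) ^ n) * ↑u⁻¹ = 1 := by
    rw [← hu]; exact u.mul_inv
  calc (((n * p).choose (m * p) : ℕ) : ZMod (p^3))
      = (((n * p).choose (m * p) : ℕ) : ZMod (p^3)) * (((((p-1).factorial : ℕ) : ZMod (p^3)) ^ n) * ↑u⁻¹) := by
        rw [h1, mul_one]
    _ = (((n.choose m : ℕ) : ZMod (p^3)) * ((((p-1).factorial : ℕ) : ZMod (p^3)) ^ n)) * ↑u⁻¹ := by
        rw [← e4]; ring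
    _ = ((n.choose m : ℕ) : ZMod (p^3)) := by rw [mul_assoc, h1, mul_one]




lemma jacobsthal3 (p : ℕ) (hp : p.Prime) (hp5 : 5 ≤ p) (n m : ℕ) :
    (((n * p^3).choose (m * p^3) : ℕ) : ZMod (p^3)) = ((n.choose m : ℕ) : ZMod (p^3)) := by
  have h1 : n * p^3 = (n * p^2) * p := by ring
  have h2 : m * p^3 = (m * p^2) * p := by ring
  have h3 : n * p^2 = (n * p) * p := by ring
  have h4 : m * p^2 = (m * p) * p := by ring
  rw [h1, h2, jacobsthal p hp hp5, h3, h4, jacobsthal p hp hp5, jacobsthal p hp hp5]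

theorem stmt2 (p : ℕ) (hp : p.Prime) (hp5 : 5 ≤ p) (n m n0 m0 : ℕ) (hn0 : n0 < p) (hm0 : m0 < p) :
    (n * p ^ 3 + n0).choose (m * p ^ 3 + m0) ≡ n.choose m * n0.choose m0 [MOD p ^ 3] := by
  haveI : NeZero (p^3) := ⟨pow_ne_zero 3 hp.pos.ne'⟩
  rw [← ZMod.natCast_eq_natCast_iff]
  rw [Nat.add_choose_eq, Nat.cast_sum]
  have hmem : ((m * p ^ 3, m0) : ℕ × ℕ) ∈ Finset.HasAntidiagonal.antidiagonal (m * p ^ 3 + m0) :=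
    Finset.HasAntidiagonal.mem_antidiagonal.mpr rfl
  rw [Finset.sum_eq_single_of_mem _ hmem ?side]
  · rw [Nat.cast_mul, jacobsthal3 p hp hp5, Nat.cast_mul]
  case side =>
    rintro ⟨i, j⟩ hb hne
    have hij : i + j = m * p ^ 3 + m0 := Finset.HasAntidiagonal.mem_antidiagonal.mp hb
    rcases lt_or_ge n0 j with hj | hj
    · rw [Nat.choose_eq_zero_of_lt hj, Nat.mul_zero, Nat.cast_zero]
    -- j ≤ n0 < p
    have hjm : j ≠ m0 := by
      rintro rfl
      have : i = m * p ^ 3 := by omega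
      subst this
      exact hne rfl
    have hpj : ¬ p ∣ i := by
      intro hd
      apply hjm
      have hA : i ≡ 0 [MOD p] := (Nat.modEq_zero_iff_dvd).mpr hd
      have hB : m * p ^ 3 ≡ 0 [MOD p] := (Nat.modEq_zero_iff_dvd).mpr ⟨m * p^2, by ring⟩
      have h2 : j ≡ m0 [MOD p] := by
        calc j ≡ i + j [MOD p] := by simpa using (hA.add_right j).symm
          _ = m * p ^ 3 + m0 := hij
          _ ≡ m0 [MOD p] := by simpa using hB.add_right m0
      have := h2
      unfold Nat.ModEq at this
      rw [Nat.mod_eq_of_lt (lt_of_le_of_lt hj hn0), Nat.mod_eq_of_lt hm0] at this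
      exact this
    have hi0 : i ≠ 0 := by rintro rfl; exact hpj (dvd_zero p)
    have hdvd : p ^ 3 ∣ (n * p ^ 3).choose i := by
      rcases Nat.eq_zero_or_pos n with rfl | hn
      · rw [Nat.zero_mul, Nat.choose_eq_zero_of_lt (Nat.pos_of_ne_zero hi0)]
        exact dvd_zero _
      · have hnp : 0 < n * p ^ 3 := by positivity
        have key := Nat.add_one_mul_choose_eq (n * p ^ 3 - 1) (i - 1)
        rw [
          show n * p ^ 3 - 1 + 1 = n * p ^ 3 by omega,
          show i - 1 + 1 = i by omega] at key
        -- key : n * p^3 * (n*p^3 - 1).choose (i-1) = (n*p^3).choose i * i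
        have hd2 : p ^ 3 ∣ (n * p ^ 3).choose i * i := by
          rw [← key]
          exact ⟨n * (n * p ^ 3 - 1).choose (i - 1), by ring⟩
        have hcop : Nat.Coprime (p ^ 3) i :=
          Nat.Coprime.pow_left 3 ((Nat.Prime.coprime_iff_not_dvd hp).mpr hpj)
        exact hcop.dvd_of_dvd_mul_right hd2
    rw [Nat.cast_mul, (ZMod.natCast_eq_zero_iff _ _).mpr hdvd, zero_mul]
end

section
/- For every prime p ≥ 5 and nonnegative integers n ≥ m and integers k ≥ 1 and i with 1 ≤ i ≤ k, the binomial coefficient C(n·p^k, m·p^k) is congruent to C(n·p^(k−i), m·p^(k−i)) modulo p^(3(k−i+1)). -/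
open Finset
open scoped Nat

namespace Stmt4Aux

/-- expansion of a product of `f r + d` with `d*d = 0`. -/
lemma prod_add_sq_zero {R : Type*} [CommRing R] (s : Finset ℕ) (f : ℕ → R) (d : R)
    (hd : d * d = 0) :
    ∏ r ∈ s, (f r + d) = (∏ r ∈ s, f r) + d * ∑ r ∈ s, ∏ t ∈ s.erase r, f t := by
  classical
  induction s using Finset.induction with
  | empty => simp
  | @insert a s ha ih =>
    have hsum : ∑ r ∈ insert a s, ∏ t ∈ (insert a s).erase r, f t
        = (∏ t ∈ s, f t) + f a * ∑ r ∈ s, ∏ t ∈ s.erase r, f t := by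
      rw [Finset.sum_insert ha, Finset.erase_insert ha]
      congr 1
      rw [Finset.mul_sum]
      refine Finset.sum_congr rfl fun r hr => ?_
      have hne : a ≠ r := fun h => ha (h ▸ hr)
      rw [Finset.erase_insert_of_ne hne,
        Finset.prod_insert (fun h => ha (Finset.mem_of_mem_erase h))]
    rw [Finset.prod_insert ha, ih, Finset.prod_insert ha, hsum]
    linear_combination (∑ r ∈ s, ∏ t ∈ s.erase r, f t) * hd

/-- the set of integers in `(0, N]` coprime to `p`. -/
def Sset (p N : ℕ) : Finset ℕ := (Ioc 0 N).filter (fun r => ¬ p ∣ r)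

lemma sum_blocks {M : Type*} [AddCommMonoid M] (p Q : ℕ) (hQ : p ∣ Q) (F : ℕ → M)
    (hF : ∀ t, F (Q + t) = F t) (e : ℕ) :
    ∑ r ∈ Sset p (e * Q), F r = e • ∑ r ∈ Sset p Q, F r := by
  classical
  have hFe : ∀ (e t : ℕ), F (e * Q + t) = F t := by
    intro e
    induction e with
    | zero => simp
    | succ e ihe =>
      intro t
      have h : (e+1) * Q + t = Q + (e * Q + t) := by ring
      rw [h, hF, ihe]
  induction e with
  | zero => simp [Sset]
  | succ e ih =>
    have hQle : e * Q ≤ (e + 1) * Q := by nlinarith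
    have hsplit : Sset p ((e+1) * Q) = Sset p (e * Q) ∪
        ((Ioc (e*Q) ((e+1)*Q)).filter (fun r => ¬ p ∣ r)) := by
      unfold Sset
      rw [← Finset.filter_union, Finset.Ioc_union_Ioc_eq_Ioc (Nat.zero_le _) hQle]
    have hdisj : Disjoint (Sset p (e * Q))
        ((Ioc (e*Q) ((e+1)*Q)).filter (fun r => ¬ p ∣ r)) := by
      simp only [Finset.disjoint_left, Sset, Finset.mem_filter, Finset.mem_Ioc]
      omega
    rw [hsplit, Finset.sum_union hdisj, ih]
    have hmap : (Ioc (e*Q) ((e+1)*Q)) = Finset.map (addLeftEmbedding (e*Q)) (Ioc 0 Q) := by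
      rw [Finset.map_add_left_Ioc, Nat.add_zero]
      congr 1 <;> ring
    have h2 : ∑ r ∈ (Ioc (e*Q) ((e+1)*Q)).filter (fun r => ¬ p ∣ r), F r
        = ∑ r ∈ Sset p Q, F r := by
      rw [hmap]
      rw [Finset.sum_filter, Finset.sum_map, Sset, Finset.sum_filter]
      refine Finset.sum_congr rfl fun t ht => ?_
      have hdvd : p ∣ e * Q + t ↔ p ∣ t := by
        constructor
        · intro h
          have := (Nat.dvd_add_right (Dvd.dvd.mul_left hQ e)).mp h
          exact this
        · intro h
          exact Nat.dvd_add (Dvd.dvd.mul_left hQ e) h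
      simp only [addLeftEmbedding_apply, hdvd, hFe e t]
    rw [h2, succ_nsmul]

lemma prod_Ioc_zero_eq_factorial (n : ℕ) : ∏ r ∈ Ioc 0 n, r = n ! := by
  induction n with
  | zero => simp
  | succ n ih => rw [Finset.prod_Ioc_succ_top (Nat.zero_le _), ih, Nat.factorial_succ, mul_comm]

lemma factorial_block (a b : ℕ) : (a + b)! = a ! * ∏ r ∈ Ioc a (a + b), r := by
  induction b with
  | zero => simp
  | succ b ih =>
    have h1 : a + (b+1) = (a + b) + 1 := by ring
    rw [h1, Finset.prod_Ioc_succ_top (by omega), Nat.factorial_succ, ih]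
    ring

lemma filter_dvd_Ioc (p x : ℕ) (hp : 0 < p) :
    (Ioc (x*p) (x*p + p)).filter (fun r => p ∣ r) = {x*p + p} := by
  ext r
  simp only [Finset.mem_filter, Finset.mem_Ioc, Finset.mem_singleton]
  constructor
  · rintro ⟨⟨h1, h2⟩, t, rfl⟩
    have : t = x + 1 := by nlinarith
    subst this; ring
  · rintro rfl
    refine ⟨⟨by omega, le_rfl⟩, x + 1, by ring⟩

/-- `(x*p)! = p^x * x! * ∏ (r ∈ (0, x*p], p ∤ r)`. -/
lemma factorial_eq (p : ℕ) (hp : 0 < p) (x : ℕ) :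
    (x * p)! = p ^ x * x ! * ∏ r ∈ Sset p (x * p), r := by
  induction x with
  | zero => simp [Sset]
  | succ x ih =>
    have h1 : (x+1) * p = x * p + p := by ring
    rw [h1, factorial_block, ih]
    have hsplit : Sset p (x*p + p) = Sset p (x*p) ∪
        ((Ioc (x*p) (x*p + p)).filter (fun r => ¬ p ∣ r)) := by
      unfold Sset
      rw [← Finset.filter_union, Finset.Ioc_union_Ioc_eq_Ioc (Nat.zero_le _) (by omega)]
    have hdisj : Disjoint (Sset p (x*p))
        ((Ioc (x*p) (x*p + p)).filter (fun r => ¬ p ∣ r)) := by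
      simp only [Finset.disjoint_left, Sset, Finset.mem_filter, Finset.mem_Ioc]
      omega
    have hIoc : ∏ r ∈ Ioc (x*p) (x*p + p), r
        = (x*p + p) * ∏ r ∈ (Ioc (x*p) (x*p + p)).filter (fun r => ¬ p ∣ r), r := by
      rw [← Finset.prod_filter_mul_prod_filter_not (Ioc (x*p) (x*p+p)) (fun r => p ∣ r),
        filter_dvd_Ioc p x hp]
      simp
    rw [hsplit, Finset.prod_union hdisj, hIoc, Nat.factorial_succ]
    ring

/-- splitting the coprime product. -/
lemma W_split (p b c : ℕ) (hp : 0 < p) :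
    ∏ r ∈ Sset p ((b + c) * p), r
      = (∏ r ∈ Sset p (b * p), r) * ∏ t ∈ Sset p (c * p), (b * p + t) := by
  classical
  have h1 : (b + c) * p = b * p + c * p := by ring
  have hsplit : Sset p (b*p + c*p) = Sset p (b*p) ∪
      ((Ioc (b*p) (b*p + c*p)).filter (fun r => ¬ p ∣ r)) := by
    unfold Sset
    rw [← Finset.filter_union, Finset.Ioc_union_Ioc_eq_Ioc (Nat.zero_le _) (by omega)]
  have hdisj : Disjoint (Sset p (b*p))
      ((Ioc (b*p) (b*p + c*p)).filter (fun r => ¬ p ∣ r)) := by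
    simp only [Finset.disjoint_left, Sset, Finset.mem_filter, Finset.mem_Ioc]
    omega
  rw [h1, hsplit, Finset.prod_union hdisj]
  congr 1
  have hmap : Ioc (b*p) (b*p + c*p) = Finset.map (addLeftEmbedding (b*p)) (Ioc 0 (c*p)) := by
    rw [Finset.map_add_left_Ioc, Nat.add_zero]
  rw [hmap, Finset.prod_filter, Finset.prod_map, Sset, Finset.prod_filter]
  refine Finset.prod_congr rfl fun t ht => ?_
  have hdvd : p ∣ b * p + t ↔ p ∣ t := by
    constructor
    · intro h; exact (Nat.dvd_add_right (Dvd.dvd.mul_left (dvd_refl p) b)).mp h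
    · intro h; exact Nat.dvd_add (Dvd.dvd.mul_left (dvd_refl p) b) h
  simp only [addLeftEmbedding_apply, hdvd]

lemma zmod_inv_inv {n : ℕ} (x : ZMod n) (hx : IsUnit x) : x⁻¹⁻¹ = x := by
  have h1 := ZMod.mul_inv_of_unit x hx
  have hu' : IsUnit x⁻¹ := IsUnit.of_mul_eq_one x (ZMod.inv_mul_of_unit x hx)
  have h2 := ZMod.mul_inv_of_unit _ hu'
  calc x⁻¹⁻¹ = (x * x⁻¹) * x⁻¹⁻¹ := by rw [h1, one_mul]
    _ = x * (x⁻¹ * x⁻¹⁻¹) := by ring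
    _ = x := by rw [h2, mul_one]

/-- sum of squares of units in `ZMod Q` vanishes when `2` and `3` are units. -/
lemma sum_sq_units_eq_zero (Q : ℕ) (h2u : IsUnit (2 : ZMod Q)) (h3u : IsUnit (3 : ZMod Q))
    (U : Finset (ZMod Q)) (hU : ∀ x, x ∈ U ↔ IsUnit x) :
    ∑ x ∈ U, x ^ 2 = 0 := by
  classical
  have h2inv : IsUnit ((2 : ZMod Q)⁻¹) :=
    IsUnit.of_mul_eq_one 2 (ZMod.inv_mul_of_unit 2 h2u)
  have hdouble : ∑ x ∈ U, ((2 : ZMod Q) * x) ^ 2 = ∑ x ∈ U, x ^ 2 := by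
    refine Finset.sum_nbij' (fun x => 2 * x) (fun y => (2 : ZMod Q)⁻¹ * y) ?_ ?_ ?_ ?_ ?_
    · intro a ha; rw [hU] at ha ⊢; exact h2u.mul ha
    · intro a ha; rw [hU] at ha ⊢; exact h2inv.mul ha
    · intro a _
      show (2 : ZMod Q)⁻¹ * (2 * a) = a
      rw [← mul_assoc, ZMod.inv_mul_of_unit 2 h2u, one_mul]
    · intro a _
      show (2 : ZMod Q) * ((2 : ZMod Q)⁻¹ * a) = a
      rw [← mul_assoc, ZMod.mul_inv_of_unit 2 h2u, one_mul]
    · intro a _; rfl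
  have h4 : ∑ x ∈ U, ((2 : ZMod Q) * x) ^ 2 = 4 * ∑ x ∈ U, x ^ 2 := by
    rw [Finset.mul_sum]
    refine Finset.sum_congr rfl fun x _ => by ring
  have h3 : (3 : ZMod Q) * ∑ x ∈ U, x ^ 2 = 3 * 0 := by
    rw [mul_zero]
    linear_combination hdouble - h4
  exact h3u.mul_left_cancel h3

/-- the key congruence: shifting the coprime product by `B*p` does not change it
mod `p^(3j+3)`, provided `p^j ∣ B, C`. -/
lemma keyA (p : ℕ) (hp : p.Prime) (hp5 : 5 ≤ p) (j B C : ℕ)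
    (hB : p ^ j ∣ B) (hC : p ^ j ∣ C) :
    ((∏ r ∈ Sset p (C * p), (B * p + r) : ℕ) : ZMod (p ^ (3 * j + 3)))
      = ((∏ r ∈ Sset p (C * p), r : ℕ) : ZMod (p ^ (3 * j + 3))) := by
  classical
  obtain ⟨B₁, hB₁⟩ := hB
  obtain ⟨C₁, hC₁⟩ := hC
  have hppos : 0 < p := hp.pos
  set P := p ^ (3 * j + 3) with hP
  haveI : NeZero P := ⟨pow_ne_zero _ hp.pos.ne'⟩
  set Q := p ^ (j + 1) with hQdef
  haveI : NeZero Q := ⟨pow_ne_zero _ hp.pos.ne'⟩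
  haveI : Fact (1 < Q) := ⟨Nat.one_lt_pow (Nat.succ_ne_zero j) hp.one_lt⟩
  set S := Sset p (C * p) with hS
  have hmemS : ∀ r, r ∈ S ↔ (0 < r ∧ r ≤ C * p ∧ ¬ p ∣ r) := by
    intro r
    simp [hS, Sset, Finset.mem_Ioc, Finset.mem_filter, and_assoc]
  have hpCp : p ∣ C * p := Dvd.intro_left C rfl
  have hQCp : Q ∣ C * p := ⟨C₁, by rw [hC₁, hQdef]; ring⟩
  have hσmem : ∀ r ∈ S, C * p - r ∈ S := by
    intro r hr
    rw [hmemS] at hr ⊢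
    obtain ⟨h1, h2, h3⟩ := hr
    have hrne : r ≠ C * p := fun h => h3 (h ▸ hpCp)
    refine ⟨by omega, by omega, fun hd => h3 ?_⟩
    have hdd := Nat.dvd_sub hpCp hd
    have he : C * p - (C * p - r) = r := by omega
    rwa [he] at hdd
  have hσ : ∀ f : ℕ → ℕ, ∏ r ∈ S, f r = ∏ r ∈ S, f (C * p - r) := by
    intro f
    refine Finset.prod_nbij' (fun r => C * p - r) (fun r => C * p - r)
      hσmem hσmem ?_ ?_ ?_
    · intro r hr; rw [hmemS] at hr
      show C * p - (C * p - r) = r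
      omega
    · intro r hr; rw [hmemS] at hr
      show C * p - (C * p - r) = r
      omega
    · intro r hr; rw [hmemS] at hr
      show f r = f (C * p - (C * p - r))
      congr 1
      omega
  set ν : ℕ → ℕ := fun r => r * (C * p - r) with hν
  set Dn : ℕ := B * p * (B * p + C * p) with hDn
  set ℓ : ℕ := ∏ r ∈ S, (B * p + r) with hℓ
  set w : ℕ := ∏ r ∈ S, r with hw
  set N : ℕ := ∑ r ∈ S, ∏ t ∈ S.erase r, ν t with hN
  -- square identities over ℕ
  have hfac : ∀ r ∈ S, (B * p + r) * (B * p + (C * p - r)) = ν r + Dn := by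
    intro r hr
    rw [hmemS] at hr
    obtain ⟨h1, h2, h3⟩ := hr
    simp only [hν, hDn]
    set s := C * p - r with hsdef
    have hs : C * p = r + s := by omega
    rw [hs]; ring
  have hLL : ℓ * ℓ = ∏ r ∈ S, (ν r + Dn) := by
    calc ℓ * ℓ = (∏ r ∈ S, (B * p + r)) * ∏ r ∈ S, (B * p + (C * p - r)) := by
          rw [hℓ, hσ (fun r => B * p + r)]
      _ = ∏ r ∈ S, ((B * p + r) * (B * p + (C * p - r))) := by
          rw [Finset.prod_mul_distrib]
      _ = ∏ r ∈ S, (ν r + Dn) := Finset.prod_congr rfl hfac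
  have hWW : w * w = ∏ r ∈ S, ν r := by
    calc w * w = (∏ r ∈ S, r) * ∏ r ∈ S, (C * p - r) := by
          rw [hw, hσ (fun r => r)]
      _ = ∏ r ∈ S, (r * (C * p - r)) := by rw [Finset.prod_mul_distrib]
      _ = ∏ r ∈ S, ν r := rfl
  -- divisibility facts
  have hDdvd : p ^ (2 * j + 2) ∣ Dn := by
    have h1 : p ^ (j + 1) ∣ B * p := ⟨B₁, by rw [hB₁]; ring⟩
    have h2 : p ^ (j + 1) ∣ B * p + C * p := by
      refine Nat.dvd_add h1 ⟨C₁, by rw [hC₁]; ring⟩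
    have h3 := mul_dvd_mul h1 h2
    rw [← pow_add] at h3
    have : 2 * j + 2 = (j + 1) + (j + 1) := by omega
    rw [this]
    exact h3
  have hD2 : (Dn : ZMod P) * (Dn : ZMod P) = 0 := by
    rw [← Nat.cast_mul, ZMod.natCast_eq_zero_iff]
    have h4 := mul_dvd_mul hDdvd hDdvd
    rw [← pow_add] at h4
    exact dvd_trans (pow_dvd_pow p (by omega)) h4
  -- the crucial sum divisibility
  have hunitQ : ∀ t ∈ S, IsUnit ((t : ℕ) : ZMod Q) := by
    intro t ht
    rw [hmemS] at ht
    rw [ZMod.isUnit_iff_coprime]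
    exact Nat.Coprime.pow_right _ (Nat.coprime_comm.mp ((hp.coprime_iff_not_dvd).mpr ht.2.2))
  have hν2 : ∀ t ∈ S, ((ν t : ℕ) : ZMod Q) = -((t : ℕ) : ZMod Q) ^ 2 := by
    intro t ht
    rw [hmemS] at ht
    have hcast : ((C * p - t : ℕ) : ZMod Q) = ((C * p : ℕ) : ZMod Q) - ((t : ℕ) : ZMod Q) :=
      Nat.cast_sub ht.2.1
    have hz : ((C * p : ℕ) : ZMod Q) = 0 := (ZMod.natCast_eq_zero_iff _ _).mpr hQCp
    simp only [hν]
    push_cast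
    rw [hcast, hz]
    ring
  have hQN : Q ∣ N := by
    rw [← ZMod.natCast_eq_zero_iff]
    have hcastN : ((N : ℕ) : ZMod Q) = ∑ r ∈ S, ∏ t ∈ S.erase r, ((ν t : ℕ) : ZMod Q) := by
      rw [hN]; push_cast; rfl
    set G : ZMod Q := ∏ t ∈ S, (-((t : ℕ) : ZMod Q) ^ 2) with hG
    have hcof : ∀ r ∈ S, ∏ t ∈ S.erase r, ((ν t : ℕ) : ZMod Q)
        = -G * (((r : ℕ) : ZMod Q)⁻¹) ^ 2 := by
      intro r hr
      have hprod : (∏ t ∈ S.erase r, ((ν t : ℕ) : ZMod Q)) * ((ν r : ℕ) : ZMod Q)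
          = ∏ t ∈ S, ((ν t : ℕ) : ZMod Q) := Finset.prod_erase_mul S _ hr
      have hSG : ∏ t ∈ S, ((ν t : ℕ) : ZMod Q) = G := by
        rw [hG]; exact Finset.prod_congr rfl hν2
      have hνunit : IsUnit ((ν r : ℕ) : ZMod Q) := by
        rw [hν2 r hr]
        exact ((hunitQ r hr).pow 2).neg
      refine hνunit.mul_right_cancel ?_
      rw [hprod, hSG, hν2 r hr]
      have hru := hunitQ r hr
      have hone : (((r : ℕ) : ZMod Q)⁻¹) ^ 2 * ((r : ℕ) : ZMod Q) ^ 2 = 1 := by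
        rw [← mul_pow, ZMod.inv_mul_of_unit _ hru, one_pow]
      linear_combination (-G) * hone
    have hsum0 : ∑ r ∈ S, (((r : ℕ) : ZMod Q)⁻¹) ^ 2 = 0 := by
      -- block decomposition
      have hCP : C * p = C₁ * Q := by rw [hC₁, hQdef]; ring
      have hpQ : p ∣ Q := dvd_pow_self p (Nat.succ_ne_zero j)
      have hFper : ∀ t, (((Q + t : ℕ) : ZMod Q)⁻¹) ^ 2 = (((t : ℕ) : ZMod Q)⁻¹) ^ 2 := by
        intro t
        have : ((Q + t : ℕ) : ZMod Q) = ((t : ℕ) : ZMod Q) := by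
          push_cast [ZMod.natCast_self]; ring
        rw [this]
      have hblocks := sum_blocks p Q hpQ (fun r => (((r : ℕ) : ZMod Q)⁻¹) ^ 2) hFper C₁
      rw [hS, hCP, hblocks]
      -- base sum over one block
      have hbase : ∑ r ∈ Sset p Q, (((r : ℕ) : ZMod Q)⁻¹) ^ 2 = 0 := by
        set U : Finset (ZMod Q) := Finset.univ.filter (fun x => IsUnit x) with hU
        have hUmem : ∀ x, x ∈ U ↔ IsUnit x := by
          intro x; simp [hU]
        have htransfer : ∑ r ∈ Sset p Q, (((r : ℕ) : ZMod Q)⁻¹) ^ 2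
            = ∑ x ∈ U, (x⁻¹) ^ 2 := by
          refine Finset.sum_nbij' (fun r => ((r : ℕ) : ZMod Q)) (fun x => x.val) ?_ ?_ ?_ ?_ ?_
          · intro r hr
            rw [hUmem]
            have : r ∈ Sset p Q := hr
            simp only [Sset, Finset.mem_filter, Finset.mem_Ioc] at this
            rw [ZMod.isUnit_iff_coprime]
            exact Nat.Coprime.pow_right _
              (Nat.coprime_comm.mp ((hp.coprime_iff_not_dvd).mpr this.2))
          · intro x hx
            rw [hUmem] at hx
            simp only [Sset, Finset.mem_filter, Finset.mem_Ioc]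
            have hxne : x ≠ 0 := hx.ne_zero
            have hval0 : x.val ≠ 0 := fun h => hxne ((ZMod.val_eq_zero x).mp h)
            have hvlt : x.val < Q := ZMod.val_lt x
            refine ⟨⟨by omega, by omega⟩, fun hdvd => ?_⟩
            have hxv : ((x.val : ℕ) : ZMod Q) = x := ZMod.natCast_rightInverse x
            rw [← hxv] at hx
            have hcop := (ZMod.isUnit_iff_coprime _ _).mp hx
            have hgcd := Nat.dvd_gcd hdvd hpQ
            rw [Nat.Coprime] at hcop
            rw [hcop] at hgcd
            have := Nat.le_of_dvd one_pos hgcd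
            omega
          · intro r hr
            simp only [Sset, Finset.mem_filter, Finset.mem_Ioc] at hr
            have hrQ : r < Q := by
              rcases Nat.lt_or_ge r Q with h | h
              · exact h
              · exfalso
                have : r = Q := by omega
                exact hr.2 (this ▸ hpQ)
            exact ZMod.val_cast_of_lt hrQ
          · intro x _
            exact ZMod.natCast_rightInverse x
          · intro r _; rfl
        rw [htransfer]
        -- now invert: sum over U of x⁻¹² = sum of x²
        have hinv : ∑ x ∈ U, (x⁻¹) ^ 2 = ∑ x ∈ U, x ^ 2 := by
          refine Finset.sum_nbij' (fun x => x⁻¹) (fun x => x⁻¹) ?_ ?_ ?_ ?_ ?_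
          · intro a ha; rw [hUmem] at ha ⊢
            exact IsUnit.of_mul_eq_one a (ZMod.inv_mul_of_unit a ha)
          · intro a ha; rw [hUmem] at ha ⊢
            exact IsUnit.of_mul_eq_one a (ZMod.inv_mul_of_unit a ha)
          · intro a ha; rw [hUmem] at ha; exact zmod_inv_inv a ha
          · intro a ha; rw [hUmem] at ha; exact zmod_inv_inv a ha
          · intro a _; rfl
        rw [hinv]
        -- 2 and 3 are units
        have hcop2 : Nat.Coprime 2 Q := Nat.Coprime.pow_right _
          ((Nat.coprime_primes Nat.prime_two hp).mpr (by omega))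
        have hcop3 : Nat.Coprime 3 Q := Nat.Coprime.pow_right _
          ((Nat.coprime_primes Nat.prime_three hp).mpr (by omega))
        have h2u : IsUnit (2 : ZMod Q) := by
          have := (ZMod.isUnit_iff_coprime 2 Q).mpr hcop2
          rwa [Nat.cast_ofNat] at this
        have h3u : IsUnit (3 : ZMod Q) := by
          have := (ZMod.isUnit_iff_coprime 3 Q).mpr hcop3
          rwa [Nat.cast_ofNat] at this
        exact sum_sq_units_eq_zero Q h2u h3u U hUmem
      rw [hbase, smul_zero]
    rw [hcastN]
    calc ∑ r ∈ S, ∏ t ∈ S.erase r, ((ν t : ℕ) : ZMod Q)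
        = ∑ r ∈ S, -G * (((r : ℕ) : ZMod Q)⁻¹) ^ 2 := Finset.sum_congr rfl hcof
      _ = -G * ∑ r ∈ S, (((r : ℕ) : ZMod Q)⁻¹) ^ 2 := by rw [Finset.mul_sum]
      _ = 0 := by rw [hsum0, mul_zero]
  -- conclude D*N = 0 in ZMod P
  have hDN : (Dn : ZMod P) * (N : ZMod P) = 0 := by
    rw [← Nat.cast_mul, ZMod.natCast_eq_zero_iff]
    obtain ⟨y, hy⟩ := hQN
    obtain ⟨z, hz⟩ := hDdvd
    refine ⟨z * y, ?_⟩
    rw [hz, hy, hQdef, hP]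
    calc p ^ (2 * j + 2) * z * (p ^ (j + 1) * y)
        = p ^ (2 * j + 2) * p ^ (j + 1) * (z * y) := by ring
      _ = p ^ (3 * j + 3) * (z * y) := by
          have h33 : 2 * j + 2 + (j + 1) = 3 * j + 3 := by omega
          rw [← pow_add, h33]
  -- expansion in ZMod P
  have hexp : ((∏ r ∈ S, (ν r + Dn) : ℕ) : ZMod P)
      = ((∏ r ∈ S, ν r : ℕ) : ZMod P) + (Dn : ZMod P) * (N : ZMod P) := by
    rw [hN]
    push_cast
    exact prod_add_sq_zero S (fun t => ((ν t : ℕ) : ZMod P)) _ hD2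
  have hsq : (ℓ : ZMod P) * (ℓ : ZMod P) = (w : ZMod P) * (w : ZMod P) := by
    calc (ℓ : ZMod P) * (ℓ : ZMod P) = ((ℓ * ℓ : ℕ) : ZMod P) := by push_cast; ring
      _ = ((∏ r ∈ S, (ν r + Dn) : ℕ) : ZMod P) := by rw [hLL]
      _ = ((∏ r ∈ S, ν r : ℕ) : ZMod P) + (Dn : ZMod P) * (N : ZMod P) := hexp
      _ = ((w * w : ℕ) : ZMod P) := by rw [hDN, add_zero, hWW]
      _ = (w : ZMod P) * (w : ZMod P) := by push_cast; ring
  -- ℓ ≡ w mod p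
  have hlw : ℓ ≡ w [MOD p] := by
    show ℓ % p = w % p
    rw [hℓ, hw, Finset.prod_nat_mod S p (fun r => B * p + r), Finset.prod_nat_mod S p (fun r => r)]
    congr 1
    refine Finset.prod_congr rfl fun r _ => ?_
    rw [add_comm, Nat.add_mul_mod_self_right]
  obtain ⟨t, ht⟩ : (p : ℤ) ∣ (w : ℤ) - (ℓ : ℤ) := (Nat.modEq_iff_dvd).mp hlw
  have hzeq : (ℓ : ZMod P) = (w : ZMod P) + (p : ZMod P) * (-(t : ZMod P)) := by
    have hcast := congrArg (fun z : ℤ => (z : ZMod P)) ht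
    push_cast at hcast
    linear_combination -hcast
  -- units
  have hwcop : Nat.Coprime w p := by
    rw [hw]
    refine Nat.Coprime.prod_left fun r hr => ?_
    rw [hmemS] at hr
    exact Nat.coprime_comm.mp ((hp.coprime_iff_not_dvd).mpr hr.2.2)
  have hwunit : IsUnit (w : ZMod P) := by
    rw [ZMod.isUnit_iff_coprime]
    exact Nat.Coprime.pow_right _ hwcop
  have h2P : IsUnit (2 : ZMod P) := by
    have hcop2 : Nat.Coprime 2 P := Nat.Coprime.pow_right _
      ((Nat.coprime_primes Nat.prime_two hp).mpr (by omega))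
    have := (ZMod.isUnit_iff_coprime 2 P).mpr hcop2
    rwa [Nat.cast_ofNat] at this
  have hnil : IsNilpotent ((p : ZMod P) * (-(t : ZMod P))) := by
    refine ⟨3 * j + 3, ?_⟩
    rw [mul_pow]
    have : (p : ZMod P) ^ (3 * j + 3) = ((p ^ (3 * j + 3) : ℕ) : ZMod P) := by push_cast; ring
    rw [this, ← hP, ZMod.natCast_self, zero_mul]
  have hunitsum : IsUnit ((ℓ : ZMod P) + (w : ZMod P)) := by
    have heq : (ℓ : ZMod P) + (w : ZMod P)
        = 2 * (w : ZMod P) + (p : ZMod P) * (-(t : ZMod P)) := by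
      rw [hzeq]; ring
    rw [heq]
    exact IsNilpotent.isUnit_add_left_of_commute hnil (h2P.mul hwunit) (Commute.all _ _)
  have hfinal : ((ℓ : ZMod P) - (w : ZMod P)) * ((ℓ : ZMod P) + (w : ZMod P))
      = 0 * ((ℓ : ZMod P) + (w : ZMod P)) := by
    rw [zero_mul]
    linear_combination hsq
  have := hunitsum.mul_right_cancel hfinal
  have hℓw : (ℓ : ZMod P) = (w : ZMod P) := by linear_combination this
  exact hℓw

/-- Jacobsthal's congruence, strengthened form. -/
lemma step (p : ℕ) (hp : p.Prime) (hp5 : 5 ≤ p) (j a b : ℕ) (hba : b ≤ a)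
    (ha : p ^ j ∣ a) (hb : p ^ j ∣ b) :
    (a * p).choose (b * p) ≡ a.choose b [MOD p ^ (3 * j + 3)] := by
  classical
  have hppos : 0 < p := hp.pos
  set c := a - b with hc
  have hac : a = b + c := by omega
  have hcj : p ^ j ∣ c := Nat.dvd_sub ha hb
  set Wa : ℕ := ∏ r ∈ Sset p (a*p), r with hWa
  set Wb : ℕ := ∏ r ∈ Sset p (b*p), r with hWb
  set Wc : ℕ := ∏ r ∈ Sset p (c*p), r with hWc
  set X : ℕ := ∏ t ∈ Sset p (c*p), (b*p + t) with hX
  have h1 : (a*p).choose (b*p) * (b*p)! * ((c*p)!) = (a*p)! := by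
    have h := Nat.choose_mul_factorial_mul_factorial (Nat.mul_le_mul_right p hba)
    rwa [← Nat.sub_mul] at h
  have h2 : a.choose b * b ! * c ! = a ! :=
    Nat.choose_mul_factorial_mul_factorial hba
  have hfa := factorial_eq p hppos a
  have hfb := factorial_eq p hppos b
  have hfc := factorial_eq p hppos c
  rw [← hWa] at hfa
  rw [← hWb] at hfb
  rw [← hWc] at hfc
  have hpow : p ^ b * p ^ c = p ^ a := by rw [← pow_add]; congr 1; omega
  have key : ((a*p).choose (b*p) * (Wb * Wc)) * (p^a * (b ! * c !))
      = (a.choose b * Wa) * (p^a * (b ! * c !)) := by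
    calc ((a*p).choose (b*p) * (Wb * Wc)) * (p^a * (b ! * c !))
        = (a*p).choose (b*p) * ((p^b * b ! * Wb) * (p^c * c ! * Wc)) := by
          rw [← hpow]; ring
      _ = (a*p).choose (b*p) * ((b*p)! * ((c*p)!)) := by rw [← hfb, ← hfc]
      _ = (a*p)! := by rw [← h1]; ring
      _ = p^a * a ! * Wa := hfa
      _ = p^a * (a.choose b * b ! * c !) * Wa := by rw [h2]
      _ = (a.choose b * Wa) * (p^a * (b ! * c !)) := by ring
  have hE : (a*p).choose (b*p) * (Wb * Wc) = a.choose b * Wa :=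
    Nat.eq_of_mul_eq_mul_right
      (Nat.mul_pos (pow_pos hppos a)
        (Nat.mul_pos b.factorial_pos c.factorial_pos)) key
  have hWsplit : Wa = Wb * X := by
    rw [hWa, hWb, hX, hac]
    exact W_split p b c hppos
  rw [hWsplit] at hE
  -- move to ZMod P
  set P := p ^ (3 * j + 3) with hP
  haveI : NeZero P := ⟨pow_ne_zero _ hp.pos.ne'⟩
  have hkeyA : ((X : ℕ) : ZMod P) = ((Wc : ℕ) : ZMod P) := by
    rw [hX, hWc, hP]
    exact keyA p hp hp5 j b c hb hcj
  have h0 := congrArg (fun t : ℕ => (t : ZMod P)) hE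
  simp only [Nat.cast_mul] at h0
  rw [hkeyA] at h0
  -- cancel units
  have hWcop : ∀ x : ℕ, Nat.Coprime (∏ r ∈ Sset p x, r) p := by
    intro x
    refine Nat.Coprime.prod_left fun r hr => ?_
    simp only [Sset, Finset.mem_filter, Finset.mem_Ioc] at hr
    exact Nat.coprime_comm.mp ((hp.coprime_iff_not_dvd).mpr hr.2)
  have hWbu : IsUnit ((Wb : ℕ) : ZMod P) := by
    rw [ZMod.isUnit_iff_coprime, hP]
    exact Nat.Coprime.pow_right _ (hWb ▸ hWcop (b*p))
  have hWcu : IsUnit ((Wc : ℕ) : ZMod P) := by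
    rw [ZMod.isUnit_iff_coprime, hP]
    exact Nat.Coprime.pow_right _ (hWc ▸ hWcop (c*p))
  have hfin : (((a*p).choose (b*p) : ℕ) : ZMod P) = ((a.choose b : ℕ) : ZMod P) := by
    refine (hWbu.mul hWcu).mul_right_cancel ?_
    calc (((a*p).choose (b*p) : ℕ) : ZMod P) * (((Wb : ℕ) : ZMod P) * ((Wc : ℕ) : ZMod P))
        = ((a.choose b : ℕ) : ZMod P) * (((Wb : ℕ) : ZMod P) * ((Wc : ℕ) : ZMod P)) := by
          linear_combination h0
      _ = _ := by ring
  exact (ZMod.natCast_eq_natCast_iff _ _ _).mp hfin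

end Stmt4Aux

theorem stmt4 (p : ℕ) (hp : p.Prime) (hp5 : 5 ≤ p) (n m k i : ℕ) (hmn : m ≤ n)
    (hk : 1 ≤ k) (hi1 : 1 ≤ i) (hik : i ≤ k) :
    (n * p ^ k).choose (m * p ^ k) ≡ (n * p ^ (k - i)).choose (m * p ^ (k - i))
      [MOD p ^ (3 * (k - i + 1))] := by
  obtain ⟨d, rfl⟩ : ∃ d, i = d + 1 := ⟨i - 1, by omega⟩
  clear hi1
  induction d with
  | zero =>
    have hkk : k - 1 + 1 = k := by omega
    have hstep := Stmt4Aux.step p hp hp5 (k-1) (n * p^(k-1)) (m * p^(k-1))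
      (Nat.mul_le_mul_right _ hmn) (dvd_mul_left _ n) (dvd_mul_left _ m)
    have e1 : n * p^(k-1) * p = n * p^k := by
      rw [mul_assoc, ← pow_succ, hkk]
    have e2 : m * p^(k-1) * p = m * p^k := by
      rw [mul_assoc, ← pow_succ, hkk]
    have e3 : 3 * (k-1) + 3 = 3 * (k - (0+1) + 1) := by omega
    rw [e1, e2, e3] at hstep
    exact hstep
  | succ d ihd =>
    have hd1 : d + 1 ≤ k := by omega
    have ih := ihd hd1
    have hj : k - (d + 1 + 1) + 1 = k - (d + 1) := by omega
    have hstep := Stmt4Aux.step p hp hp5 (k - (d+1+1)) (n * p^(k - (d+1+1)))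
      (m * p^(k - (d+1+1))) (Nat.mul_le_mul_right _ hmn)
      (dvd_mul_left _ n) (dvd_mul_left _ m)
    have e1 : n * p^(k - (d+1+1)) * p = n * p^(k - (d+1)) := by
      rw [mul_assoc, ← pow_succ, hj]
    have e2 : m * p^(k - (d+1+1)) * p = m * p^(k - (d+1)) := by
      rw [mul_assoc, ← pow_succ, hj]
    rw [e1, e2] at hstep
    have hdvd : p ^ (3 * (k - (d+1+1)) + 3) ∣ p ^ (3 * (k - (d+1) + 1)) :=
      pow_dvd_pow p (by omega)
    have ih' := (ih.of_dvd hdvd)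
    have e3 : 3 * (k - (d+1+1)) + 3 = 3 * (k - (d+1+1) + 1) := by omega
    rw [e3] at ih' hstep
    exact ih'.trans hstep
end

section
/- For every prime p ≥ 5 and nonnegative integers n ≥ m and k ≥ 1, the binomial coefficient C(n·p^k, m·p^k) is congruent to C(n·p^⌊(k−1)/3⌋, m·p^⌊(k−1)/3⌋) modulo p^k. -/
open Finset

/-- Uniqueness of inverses in `ZMod`. -/
lemma zmod_inv_eq {N : ℕ} {a b : ZMod N} (ha : IsUnit a) (h : b * a = 1) : a⁻¹ = b := by
  calc a⁻¹ = (b * a) * a⁻¹ := by rw [h, one_mul]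
  _ = b * (a * a⁻¹) := by ring
  _ = b := by rw [ZMod.mul_inv_of_unit a ha, mul_one]

lemma zmod_inv_mul {N : ℕ} {a b : ZMod N} (ha : IsUnit a) (hb : IsUnit b) :
    (a * b)⁻¹ = a⁻¹ * b⁻¹ := by
  refine zmod_inv_eq (ha.mul hb) ?_
  calc a⁻¹ * b⁻¹ * (a * b) = (a⁻¹ * a) * (b⁻¹ * b) := by ring
  _ = 1 := by rw [ZMod.inv_mul_of_unit a ha, ZMod.inv_mul_of_unit b hb, one_mul]

lemma zmod_inv_neg {N : ℕ} {a : ZMod N} (ha : IsUnit a) : (-a)⁻¹ = -a⁻¹ := by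
  refine zmod_inv_eq ha.neg ?_
  rw [neg_mul_neg, ZMod.inv_mul_of_unit a ha]

/-- Sum of inverses of all units of `ZMod N` vanishes when 2 is a unit. -/
lemma sum_units_inv {N : ℕ} [NeZero N] (h2 : IsUnit (2 : ZMod N)) :
    ∑ x ∈ univ.filter (fun x : ZMod N => IsUnit x), x⁻¹ = 0 := by
  set S := ∑ x ∈ univ.filter (fun x : ZMod N => IsUnit x), x⁻¹ with hS
  have key : ∑ x ∈ univ.filter (fun x : ZMod N => IsUnit x), ((2:ZMod N) * x)⁻¹ = S := by
    refine Finset.sum_nbij' (fun x => (2:ZMod N) * x) (fun y => (2:ZMod N)⁻¹ * y) ?_ ?_ ?_ ?_ ?_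
    · intro a ha; simp only [mem_filter, mem_univ, true_and] at ha ⊢; exact h2.mul ha
    · intro a ha; simp only [mem_filter, mem_univ, true_and] at ha ⊢
      exact (IsUnit.of_mul_eq_one _ (ZMod.inv_mul_of_unit 2 h2)).mul ha
    · intro a _; show (2:ZMod N)⁻¹ * ((2:ZMod N) * a) = a
      rw [← mul_assoc, ZMod.inv_mul_of_unit 2 h2, one_mul]
    · intro a _; show (2:ZMod N) * ((2:ZMod N)⁻¹ * a) = a
      rw [← mul_assoc, ZMod.mul_inv_of_unit 2 h2, one_mul]
    · intro a _; rfl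
  have key2 : ∀ x ∈ univ.filter (fun x : ZMod N => IsUnit x),
      ((2:ZMod N) * x)⁻¹ = (2:ZMod N)⁻¹ * x⁻¹ := by
    intro x hx; simp only [mem_filter, mem_univ, true_and] at hx
    exact zmod_inv_mul h2 hx
  rw [Finset.sum_congr rfl key2, ← Finset.mul_sum, ← hS] at key
  have : (2:ZMod N) * ((2:ZMod N)⁻¹ * S) = 2 * S := by rw [key]
  rw [← mul_assoc, ZMod.mul_inv_of_unit 2 h2, one_mul, two_mul] at this
  exact (add_eq_left.mp this.symm)

/-- Sum of squares of inverses of all units of `ZMod N` vanishes when 2 and 3 are units. -/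
lemma sum_units_inv_sq {N : ℕ} [NeZero N] (h2 : IsUnit (2 : ZMod N)) (h3 : IsUnit (3 : ZMod N)) :
    ∑ x ∈ univ.filter (fun x : ZMod N => IsUnit x), x⁻¹ * x⁻¹ = 0 := by
  set S := ∑ x ∈ univ.filter (fun x : ZMod N => IsUnit x), x⁻¹ * x⁻¹ with hS
  have key : ∑ x ∈ univ.filter (fun x : ZMod N => IsUnit x), (((2:ZMod N) * x)⁻¹ * ((2:ZMod N) * x)⁻¹) = S := by
    refine Finset.sum_nbij' (fun x => (2:ZMod N) * x) (fun y => (2:ZMod N)⁻¹ * y) ?_ ?_ ?_ ?_ ?_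
    · intro a ha; simp only [mem_filter, mem_univ, true_and] at ha ⊢; exact h2.mul ha
    · intro a ha; simp only [mem_filter, mem_univ, true_and] at ha ⊢
      exact (IsUnit.of_mul_eq_one _ (ZMod.inv_mul_of_unit 2 h2)).mul ha
    · intro a _; show (2:ZMod N)⁻¹ * ((2:ZMod N) * a) = a
      rw [← mul_assoc, ZMod.inv_mul_of_unit 2 h2, one_mul]
    · intro a _; show (2:ZMod N) * ((2:ZMod N)⁻¹ * a) = a
      rw [← mul_assoc, ZMod.mul_inv_of_unit 2 h2, one_mul]
    · intro a _; rfl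
  have key2 : ∀ x ∈ univ.filter (fun x : ZMod N => IsUnit x),
      ((2:ZMod N) * x)⁻¹ * ((2:ZMod N) * x)⁻¹ = ((2:ZMod N)⁻¹ * (2:ZMod N)⁻¹) * (x⁻¹ * x⁻¹) := by
    intro x hx; simp only [mem_filter, mem_univ, true_and] at hx
    rw [zmod_inv_mul h2 hx]; ring
  rw [Finset.sum_congr rfl key2, ← Finset.mul_sum, ← hS] at key
  -- key : 2⁻¹ * 2⁻¹ * S = S, multiply by 4
  have h4 : (2:ZMod N) * 2 * ((2:ZMod N)⁻¹ * (2:ZMod N)⁻¹ * S) = 2 * 2 * S := by rw [key]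
  have h4' : (2:ZMod N) * 2 * ((2:ZMod N)⁻¹ * (2:ZMod N)⁻¹ * S)
      = ((2:ZMod N) * (2:ZMod N)⁻¹) * ((2:ZMod N) * (2:ZMod N)⁻¹) * S := by ring
  rw [h4', ZMod.mul_inv_of_unit 2 h2, one_mul, one_mul] at h4
  -- h4 : S = 4 * S, hence 3 * S = 0
  have h3S : (3:ZMod N) * S = 0 := by linear_combination -h4
  calc S = ((3:ZMod N)⁻¹ * 3) * S := by rw [ZMod.inv_mul_of_unit 3 h3, one_mul]
  _ = (3:ZMod N)⁻¹ * (3 * S) := by ring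
  _ = 0 := by rw [h3S, mul_zero]
lemma isUnit_cast_of_not_dvd {p : ℕ} (hp : p.Prime) {s i : ℕ} (hi : ¬ p ∣ i) :
    IsUnit ((i : ℕ) : ZMod (p ^ s)) := by
  haveI : NeZero (p ^ s) := ⟨pow_ne_zero s hp.pos.ne'⟩
  rw [ZMod.isUnit_iff_coprime]
  exact ((Nat.Prime.coprime_iff_not_dvd hp).mpr hi).symm.pow_right s

/-- Sum over a range of `m` blocks of a residue-dependent function equals `m` copies
of the sum over units. -/
lemma block_sum {p : ℕ} (hp : p.Prime) {j : ℕ} (hj : 0 < j) [NeZero (p ^ j)]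
    (m : ℕ) (g : ZMod (p ^ j) → ZMod (p ^ j)) :
    ∑ i ∈ (Finset.range (m * p ^ j)).filter (fun i => ¬ p ∣ i), g ((i : ℕ) : ZMod (p ^ j))
      = (m : ZMod (p ^ j)) *
        ∑ x ∈ Finset.univ.filter (fun x : ZMod (p ^ j) => IsUnit x), g x := by
  have hpq : p ∣ p ^ j := dvd_pow_self p hj.ne'
  -- single block
  have base : ∑ i ∈ (Finset.range (p ^ j)).filter (fun i => ¬ p ∣ i), g ((i : ℕ) : ZMod (p ^ j))
      = ∑ x ∈ Finset.univ.filter (fun x : ZMod (p ^ j) => IsUnit x), g x := by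
    refine Finset.sum_nbij' (fun i => ((i:ℕ) : ZMod (p ^ j))) (fun x => x.val) ?_ ?_ ?_ ?_ ?_
    · intro a ha
      simp only [Finset.mem_filter, Finset.mem_range, Finset.mem_univ, true_and] at ha ⊢
      exact isUnit_cast_of_not_dvd hp ha.2
    · intro x hx
      simp only [Finset.mem_filter, Finset.mem_range, Finset.mem_univ, true_and] at hx ⊢
      refine ⟨ZMod.val_lt x, fun hdvd => ?_⟩
      have hcop : Nat.Coprime (x.val) (p ^ j) := by
        have : IsUnit ((x.val : ℕ) : ZMod (p ^ j)) := by
          rw [ZMod.natCast_val, ZMod.cast_id]; exact hx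
        exact (ZMod.isUnit_iff_coprime _ _).mp this
      have : p ∣ 1 := hcop ▸ Nat.dvd_gcd hdvd hpq
      exact hp.one_lt.ne' (Nat.dvd_one.mp this)
    · intro a ha
      simp only [Finset.mem_filter, Finset.mem_range] at ha
      exact ZMod.val_natCast_of_lt ha.1
    · intro x _
      show ((x.val : ℕ) : ZMod (p ^ j)) = x
      rw [ZMod.natCast_val, ZMod.cast_id]
    · intro a _; rfl
  -- induction on m
  induction m with
  | zero => simp
  | succ m ih =>
    have hsplit : (m + 1) * p ^ j = m * p ^ j + p ^ j := by ring
    rw [hsplit]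
    rw [Finset.sum_filter] at ih ⊢
    rw [Finset.sum_range_add]
    have hshift : ∀ i, (if ¬ p ∣ (m * p ^ j + i) then g ((↑(m * p ^ j + i) : ZMod (p ^ j))) else 0)
        = (if ¬ p ∣ i then g ((i : ℕ) : ZMod (p ^ j)) else 0) := by
      intro i
      have h1 : (p ∣ m * p ^ j + i) ↔ (p ∣ i) := Nat.dvd_add_right (Dvd.dvd.mul_left hpq m)
      have h2 : ((m * p ^ j + i : ℕ) : ZMod (p ^ j)) = ((i : ℕ) : ZMod (p ^ j)) := by
        rw [Nat.cast_add, Nat.cast_mul, ZMod.natCast_self, mul_zero, zero_add]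
      rw [h2]
      by_cases h : p ∣ i
      · rw [if_neg (by simpa [h1] using h), if_neg (by simpa using h)]
      · rw [if_pos (by simpa [h1] using h), if_pos (by simpa using h)]
    rw [Finset.sum_congr rfl (fun i _ => hshift i)]
    rw [ih, ← Finset.sum_filter, base]
    push_cast
    ring
lemma isUnit_two_zmod {p : ℕ} (hp : p.Prime) (hp5 : 5 ≤ p) (s : ℕ) :
    IsUnit (2 : ZMod (p ^ s)) := by
  have h := isUnit_cast_of_not_dvd (s := s) hp (i := 2)
    (fun hdvd => by have := Nat.le_of_dvd (by norm_num) hdvd; omega)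
  simpa using h

lemma isUnit_three_zmod {p : ℕ} (hp : p.Prime) (hp5 : 5 ≤ p) (s : ℕ) :
    IsUnit (3 : ZMod (p ^ s)) := by
  have h := isUnit_cast_of_not_dvd (s := s) hp (i := 3)
    (fun hdvd => by have := Nat.le_of_dvd (by norm_num) hdvd; omega)
  simpa using h

/-- Sum of inverses over one of our index sets, in `ZMod (p ^ j)`, vanishes. -/
lemma sum_inv_zero {p : ℕ} (hp : p.Prime) (hp5 : 5 ≤ p) {j : ℕ} (hj : 0 < j) (m : ℕ) :
    ∑ i ∈ (Finset.range (m * p ^ j)).filter (fun i => ¬ p ∣ i),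
      ((i : ℕ) : ZMod (p ^ j))⁻¹ = 0 := by
  haveI : NeZero (p ^ j) := ⟨pow_ne_zero j hp.pos.ne'⟩
  rw [block_sum hp hj m (fun x => x⁻¹), sum_units_inv (isUnit_two_zmod hp hp5 j), mul_zero]

/-- Sum of squared inverses over one of our index sets, in `ZMod (p ^ j)`, vanishes. -/
lemma sum_inv_sq_zero {p : ℕ} (hp : p.Prime) (hp5 : 5 ≤ p) {j : ℕ} (hj : 0 < j) (m : ℕ) :
    ∑ i ∈ (Finset.range (m * p ^ j)).filter (fun i => ¬ p ∣ i),
      (((i : ℕ) : ZMod (p ^ j))⁻¹ * ((i : ℕ) : ZMod (p ^ j))⁻¹) = 0 := by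
  haveI : NeZero (p ^ j) := ⟨pow_ne_zero j hp.pos.ne'⟩
  rw [block_sum hp hj m (fun x => x⁻¹ * x⁻¹),
    sum_units_inv_sq (isUnit_two_zmod hp hp5 j) (isUnit_three_zmod hp hp5 j), mul_zero]

/-- The reduction map commutes with inverses of units coming from naturals. -/
lemma castHom_natCast_inv {p : ℕ} (hp : p.Prime) {a b : ℕ} (hba : b ≤ a) (i : ℕ) (hi : ¬ p ∣ i) :
    (ZMod.castHom (pow_dvd_pow p hba) (ZMod (p ^ b))) (((i : ℕ) : ZMod (p ^ a))⁻¹)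
      = ((i : ℕ) : ZMod (p ^ b))⁻¹ := by
  symm
  refine zmod_inv_eq (isUnit_cast_of_not_dvd hp hi) ?_
  have h1 : (ZMod.castHom (pow_dvd_pow p hba) (ZMod (p ^ b))) ((i : ZMod (p ^ a))⁻¹ * (i : ZMod (p ^ a))) = 1 := by
    rw [ZMod.inv_mul_of_unit _ (isUnit_cast_of_not_dvd hp hi), map_one]
  rw [map_mul, map_natCast] at h1
  exact h1

/-- An element of `ZMod (p ^ a)` that dies in `ZMod (p ^ b)` is a multiple of `p ^ b`. -/
lemma exists_of_castHom_eq_zero {p : ℕ} (hp : p.Prime) {a b : ℕ} (hba : b ≤ a) (x : ZMod (p ^ a))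
    (hx : (ZMod.castHom (pow_dvd_pow p hba) (ZMod (p ^ b))) x = 0) :
    ∃ y : ZMod (p ^ a), x = (p : ZMod (p ^ a)) ^ b * y := by
  haveI : NeZero (p ^ a) := ⟨pow_ne_zero a hp.pos.ne'⟩
  haveI : NeZero (p ^ b) := ⟨pow_ne_zero b hp.pos.ne'⟩
  have hval : ((x.val : ℕ) : ZMod (p ^ b)) = 0 := by
    rw [ZMod.natCast_val]
    rw [ZMod.castHom_apply] at hx
    exact hx
  obtain ⟨c, hc⟩ := (ZMod.natCast_eq_zero_iff _ _).mp hval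
  refine ⟨(c : ZMod (p ^ a)), ?_⟩
  have hxv : x = ((x.val : ℕ) : ZMod (p ^ a)) := by rw [ZMod.natCast_val, ZMod.cast_id]
  rw [hxv, hc]
  push_cast
  ring
/-- Members of the index set. -/
lemma mem_I {p M i : ℕ} (h : i ∈ (Finset.range M).filter (fun i => ¬ p ∣ i)) :
    0 < i ∧ i < M ∧ ¬ p ∣ i := by
  simp only [Finset.mem_filter, Finset.mem_range] at h
  exact ⟨Nat.pos_of_ne_zero (fun h0 => h.2 (h0 ▸ dvd_zero p)), h.1, h.2⟩

/-- Sum of inverses over the index set vanishes in `ZMod (p ^ (2 * j))` (Wolstenholme-type). -/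
lemma sum_inv_zero_strong {p : ℕ} (hp : p.Prime) (hp5 : 5 ≤ p) {j : ℕ} (hj : 0 < j) (m : ℕ) :
    ∑ i ∈ (Finset.range (m * p ^ j)).filter (fun i => ¬ p ∣ i),
      ((i : ℕ) : ZMod (p ^ (2 * j)))⁻¹ = 0 := by
  haveI : NeZero (p ^ (2 * j)) := ⟨pow_ne_zero _ hp.pos.ne'⟩
  haveI : NeZero (p ^ j) := ⟨pow_ne_zero _ hp.pos.ne'⟩
  set M := m * p ^ j with hM
  set I := (Finset.range M).filter (fun i => ¬ p ∣ i) with hI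
  set S : ZMod (p ^ (2 * j)) := ∑ i ∈ I, ((i : ℕ) : ZMod (p ^ (2 * j)))⁻¹ with hS
  have hpM : p ∣ M := Dvd.dvd.mul_left (dvd_pow_self p hj.ne') m
  have hmem : ∀ i ∈ I, (M - i) ∈ I := by
    intro i hi
    obtain ⟨h0, hlt, hnd⟩ := mem_I hi
    simp only [hI, Finset.mem_filter, Finset.mem_range]
    constructor
    · omega
    · intro hd
      exact hnd (by have := Nat.dvd_sub hpM hd; rwa [Nat.sub_sub_self hlt.le] at this)
  have h_pair : S = ∑ i ∈ I, (((M - i : ℕ) : ZMod (p ^ (2 * j))))⁻¹ := by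
    rw [hS]
    refine Finset.sum_nbij' (fun i => M - i) (fun i => M - i) ?_ ?_ ?_ ?_ ?_
    · exact hmem
    · exact hmem
    · intro a ha; obtain ⟨h0, hlt, _⟩ := mem_I ha; show M - (M - a) = a; omega
    · intro a ha; obtain ⟨h0, hlt, _⟩ := mem_I ha; show M - (M - a) = a; omega
    · intro a ha
      obtain ⟨h0, hlt, _⟩ := mem_I ha
      have : M - (M - a) = a := by omega
      rw [this]
  have hsum2 : 2 * S = ∑ i ∈ I, ((M : ZMod (p ^ (2 * j))) *
      (((i : ℕ) : ZMod (p ^ (2 * j)))⁻¹ * (((M - i : ℕ) : ZMod (p ^ (2 * j))))⁻¹)) := by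
    have htwo : 2 * S = S + S := two_mul S
    rw [htwo]
    nth_rewrite 2 [h_pair]
    rw [hS, ← Finset.sum_add_distrib]
    refine Finset.sum_congr rfl ?_
    intro i hi
    obtain ⟨h0, hlt, hnd⟩ := mem_I hi
    have hnd' : ¬ p ∣ (M - i) := (mem_I (hmem i hi)).2.2
    have hu1 : IsUnit ((i : ℕ) : ZMod (p ^ (2 * j))) := isUnit_cast_of_not_dvd hp hnd
    have hu2 : IsUnit (((M - i : ℕ) : ℕ) : ZMod (p ^ (2 * j))) := isUnit_cast_of_not_dvd hp hnd'
    have hadd : ((i : ℕ) : ZMod (p ^ (2 * j))) + ((M - i : ℕ) : ZMod (p ^ (2 * j)))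
        = (M : ZMod (p ^ (2 * j))) := by
      rw [← Nat.cast_add]
      congr 1
      omega
    calc ((i : ℕ) : ZMod (p ^ (2 * j)))⁻¹ + (((M - i : ℕ) : ZMod (p ^ (2 * j))))⁻¹
        = (((i : ℕ) : ZMod (p ^ (2 * j))) * ((i : ℕ) : ZMod (p ^ (2 * j)))⁻¹)
            * (((M - i : ℕ) : ZMod (p ^ (2 * j))))⁻¹
          + (((M - i : ℕ) : ZMod (p ^ (2 * j))) * (((M - i : ℕ) : ZMod (p ^ (2 * j))))⁻¹)
            * ((i : ℕ) : ZMod (p ^ (2 * j)))⁻¹ := by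
          rw [ZMod.mul_inv_of_unit _ hu1, ZMod.mul_inv_of_unit _ hu2, one_mul, one_mul, add_comm]
    _ = (((i : ℕ) : ZMod (p ^ (2 * j))) + ((M - i : ℕ) : ZMod (p ^ (2 * j)))) *
          (((i : ℕ) : ZMod (p ^ (2 * j)))⁻¹ * (((M - i : ℕ) : ZMod (p ^ (2 * j))))⁻¹) := by ring
    _ = _ := by rw [hadd]
  rw [← Finset.mul_sum] at hsum2
  set T : ZMod (p ^ (2 * j)) := ∑ i ∈ I, (((i : ℕ) : ZMod (p ^ (2 * j)))⁻¹ *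
    (((M - i : ℕ) : ZMod (p ^ (2 * j))))⁻¹) with hT
  -- T reduces to 0 mod p^j
  have hj2 : j ≤ 2 * j := by omega
  have hTred : (ZMod.castHom (pow_dvd_pow p hj2) (ZMod (p ^ j))) T = 0 := by
    rw [hT, map_sum]
    have : ∀ i ∈ I, (ZMod.castHom (pow_dvd_pow p hj2) (ZMod (p ^ j)))
        (((i : ℕ) : ZMod (p ^ (2 * j)))⁻¹ * (((M - i : ℕ) : ZMod (p ^ (2 * j))))⁻¹)
        = -(((i : ℕ) : ZMod (p ^ j))⁻¹ * ((i : ℕ) : ZMod (p ^ j))⁻¹) := by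
      intro i hi
      obtain ⟨h0, hlt, hnd⟩ := mem_I hi
      have hnd' : ¬ p ∣ (M - i) := (mem_I (hmem i hi)).2.2
      rw [map_mul, castHom_natCast_inv hp hj2 i hnd, castHom_natCast_inv hp hj2 (M - i) hnd']
      have hMi : ((M - i : ℕ) : ZMod (p ^ j)) = -((i : ℕ) : ZMod (p ^ j)) := by
        have hcast : ((M - i : ℕ) : ZMod (p ^ j)) = (M : ZMod (p ^ j)) - ((i : ℕ) : ZMod (p ^ j)) :=
          Nat.cast_sub hlt.le
        have hM0 : (M : ZMod (p ^ j)) = 0 := by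
          rw [hM, Nat.cast_mul, Nat.cast_pow, ← Nat.cast_pow, ZMod.natCast_self, mul_zero]
        rw [hcast, hM0, zero_sub]
      rw [hMi, zmod_inv_neg (isUnit_cast_of_not_dvd hp hnd)]
      ring
    rw [Finset.sum_congr rfl this, Finset.sum_neg_distrib, neg_eq_zero]
    exact sum_inv_sq_zero hp hp5 hj m
  obtain ⟨t, ht⟩ := exists_of_castHom_eq_zero hp hj2 T hTred
  -- conclude 2 * S = 0
  have hM2 : (M : ZMod (p ^ (2 * j))) * (p : ZMod (p ^ (2 * j))) ^ j = 0 := by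
    rw [hM]
    push_cast
    have : ((p : ZMod (p ^ (2 * j))) ^ j) * ((p : ZMod (p ^ (2 * j))) ^ j)
        = ((p ^ (2 * j) : ℕ) : ZMod (p ^ (2 * j))) := by
      push_cast
      ring
    calc (m : ZMod (p ^ (2 * j))) * (p : ZMod (p ^ (2 * j))) ^ j * (p : ZMod (p ^ (2 * j))) ^ j
        = (m : ZMod (p ^ (2 * j))) * (((p : ZMod (p ^ (2 * j))) ^ j) * ((p : ZMod (p ^ (2 * j))) ^ j)) := by ring
    _ = 0 := by rw [this, ZMod.natCast_self, mul_zero]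
  have h2S : 2 * S = 0 := by
    rw [hsum2, ht, ← mul_assoc, hM2, zero_mul]
  have h2 : IsUnit (2 : ZMod (p ^ (2 * j))) := isUnit_two_zmod hp hp5 _
  calc S = ((2 : ZMod (p ^ (2 * j)))⁻¹ * 2) * S := by rw [ZMod.inv_mul_of_unit _ h2, one_mul]
  _ = (2 : ZMod (p ^ (2 * j)))⁻¹ * (2 * S) := by ring
  _ = 0 := by rw [h2S, mul_zero]
/-- Expansion of a product of `1 + a * u i` when `a ^ 3 = 0`. -/
lemma prod_one_add_expand {R : Type*} [CommRing R] (a : R) (ha : a ^ 3 = 0)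
    (s : Finset ℕ) (u : ℕ → R) :
    ∃ E : R, (∏ i ∈ s, (1 + a * u i) = 1 + a * (∑ i ∈ s, u i) + a ^ 2 * E) ∧
      (2 * E = (∑ i ∈ s, u i) ^ 2 - ∑ i ∈ s, (u i) ^ 2) := by
  classical
  induction s using Finset.induction_on with
  | empty => exact ⟨0, by simp, by simp⟩
  | insert _ _ hx ih =>
    rename_i x s'
    obtain ⟨E, hE1, hE2⟩ := ih
    refine ⟨E + u x * (∑ i ∈ s', u i), ?_, ?_⟩
    · rw [Finset.prod_insert hx, Finset.sum_insert hx, hE1]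
      linear_combination (u x * E) * ha
    · rw [Finset.sum_insert hx, Finset.sum_insert hx]
      linear_combination hE2

/-- The product of the units in a block `[0, N*p)`. -/
def Fprod (p N : ℕ) : ℕ := ∏ i ∈ (Finset.range (N * p)).filter (fun i => ¬ p ∣ i), i

lemma Fprod_pos {p N : ℕ} : 0 < Fprod p N := by
  apply Finset.prod_pos
  intro i hi
  simp only [Finset.mem_filter, Finset.mem_range] at hi
  exact Nat.pos_of_ne_zero (fun h0 => hi.2 (h0 ▸ dvd_zero p))

/-- `(N*p)! = p^N * N! * Fprod p N`. -/
lemma factorial_eq {p : ℕ} (hp : p.Prime) (N : ℕ) :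
    Nat.factorial (N * p) = p ^ N * Nat.factorial N * Fprod p N := by
  induction N with
  | zero => simp [Fprod]
  | succ N ih =>
    have hps : 0 < p := hp.pos
    have hfact : Nat.factorial ((N + 1) * p) = Nat.factorial (N * p) *
        ∏ i ∈ Finset.Ico (N * p + 1) ((N + 1) * p + 1), i := by
      rw [← Finset.prod_Ico_id_eq_factorial, ← Finset.prod_Ico_id_eq_factorial,
        Finset.prod_Ico_consecutive]
      · omega
      · have : N * p ≤ (N + 1) * p := Nat.mul_le_mul_right p (by omega)
        omega
    -- split the block into the p-divisible part and the rest
    have hblock : ∏ i ∈ Finset.Ico (N * p + 1) ((N + 1) * p + 1), i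
        = ((N + 1) * p) * ∏ i ∈ (Finset.Ico (N * p + 1) ((N + 1) * p + 1)).filter
            (fun i => ¬ p ∣ i), i := by
      rw [← Finset.prod_filter_mul_prod_filter_not (Finset.Ico (N * p + 1) ((N + 1) * p + 1))
        (fun i => p ∣ i)]
      congr 1
      have hsingle : (Finset.Ico (N * p + 1) ((N + 1) * p + 1)).filter (fun i => p ∣ i)
          = {(N + 1) * p} := by
        ext i
        simp only [Finset.mem_filter, Finset.mem_Ico, Finset.mem_singleton]
        constructor
        · rintro ⟨⟨h1, h2⟩, c, rfl⟩
          have hc1 : N < c := by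
            by_contra h
            push_neg at h
            have : p * c ≤ N * p := by calc p * c = c * p := by ring
                                       _ ≤ N * p := Nat.mul_le_mul_right p h
            omega
          have hc2 : c ≤ N + 1 := by
            by_contra h
            push_neg at h
            have : (N + 2) * p ≤ p * c := by calc (N+2) * p = p * (N+2) := by ring
                                            _ ≤ p * c := Nat.mul_le_mul_left p h
            nlinarith
          have : c = N + 1 := by omega
          rw [this]; ring
        · rintro rfl
          refine ⟨⟨by nlinarith, by omega⟩, ⟨N + 1, by ring⟩⟩
      rw [hsingle, Finset.prod_singleton]
    have hFsplit : Fprod p (N + 1) = Fprod p N *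
        ∏ i ∈ (Finset.Ico (N * p + 1) ((N + 1) * p + 1)).filter (fun i => ¬ p ∣ i), i := by
      unfold Fprod
      have hIco : (Finset.range ((N + 1) * p)).filter (fun i => ¬ p ∣ i)
          = ((Finset.range (N * p)).filter (fun i => ¬ p ∣ i)) ∪
            ((Finset.Ico (N * p + 1) ((N + 1) * p + 1)).filter (fun i => ¬ p ∣ i)) := by
        ext i
        simp only [Finset.mem_filter, Finset.mem_range, Finset.mem_union, Finset.mem_Ico]
        constructor
        · rintro ⟨h1, h2⟩
          by_cases h : i < N * p
          · exact Or.inl ⟨h, h2⟩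
          · refine Or.inr ⟨⟨?_, by omega⟩, h2⟩
            rcases Nat.eq_or_lt_of_le (Nat.le_of_not_lt h) with heq | hlt
            · exfalso; exact h2 (heq ▸ dvd_mul_left p N)
            · omega
        · rintro (⟨h1, h2⟩ | ⟨⟨h1, h2⟩, h3⟩)
          · exact ⟨by nlinarith, h2⟩
          · refine ⟨?_, h3⟩
            rcases Nat.eq_or_lt_of_le (Nat.le_of_lt_succ (by omega : i < (N+1) * p + 1)) with heq | hlt
            · exfalso; exact h3 (heq ▸ dvd_mul_left p (N+1))
            · omega
      rw [hIco, Finset.prod_union]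
      refine Finset.disjoint_left.mpr ?_
      intro i hi1 hi2
      simp only [Finset.mem_filter, Finset.mem_range, Finset.mem_Ico] at hi1 hi2
      omega
    rw [hfact, hblock, ih, hFsplit, Nat.factorial_succ]
    ring
lemma Fprod_add {p : ℕ} (hp : p.Prime) (c b : ℕ) :
    Fprod p (c + b) = Fprod p c *
      ∏ i ∈ (Finset.range (b * p)).filter (fun i => ¬ p ∣ i), (c * p + i) := by
  unfold Fprod
  have hsplit : (Finset.range ((c + b) * p)).filter (fun i => ¬ p ∣ i)
      = ((Finset.range (c * p)).filter (fun i => ¬ p ∣ i)) ∪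
        ((Finset.Ico (c * p) ((c + b) * p)).filter (fun i => ¬ p ∣ i)) := by
    simp only [Finset.range_eq_Ico]
    rw [← Finset.filter_union,
      Finset.Ico_union_Ico_eq_Ico (Nat.zero_le _) (Nat.mul_le_mul_right p (by omega))]
  rw [hsplit, Finset.prod_union]
  · congr 1
    refine Finset.prod_nbij' (fun i => i - c * p) (fun i => c * p + i) ?_ ?_ ?_ ?_ ?_
    · intro i hi
      simp only [Finset.mem_filter, Finset.mem_Ico, Finset.mem_range] at hi ⊢
      obtain ⟨⟨h1, h2⟩, h3⟩ := hi
      have hcb : (c + b) * p = c * p + b * p := by ring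
      refine ⟨by omega, fun hd => h3 ?_⟩
      have : c * p + (i - c * p) = i := by omega
      rw [← this]
      exact Nat.dvd_add (dvd_mul_left p c) hd
    · intro i hi
      simp only [Finset.mem_filter, Finset.mem_range, Finset.mem_Ico] at hi ⊢
      obtain ⟨h1, h2⟩ := hi
      have hcb : (c + b) * p = c * p + b * p := by ring
      refine ⟨⟨by omega, by omega⟩, fun hd => h2 ?_⟩
      have := Nat.dvd_sub hd (dvd_mul_left p c)
      simpa using this
    · intro i hi
      simp only [Finset.mem_filter, Finset.mem_Ico] at hi
      show c * p + (i - c * p) = i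
      omega
    · intro i _
      show (c * p + i) - c * p = i
      omega
    · intro i hi
      simp only [Finset.mem_filter, Finset.mem_Ico] at hi
      show i = c * p + (i - c * p)
      omega
  · refine Finset.disjoint_left.mpr ?_
    intro i hi1 hi2
    simp only [Finset.mem_filter, Finset.mem_range, Finset.mem_Ico] at hi1 hi2
    omega

/-- The key identity: `C(ap, bp) * Fprod p b = C(a, b) * ∏ (c*p + i)` with `c = a - b`. -/
lemma choose_identity {p : ℕ} (hp : p.Prime) {a b : ℕ} (hba : b ≤ a) :
    (a * p).choose (b * p) * Fprod p b
      = a.choose b * ∏ i ∈ (Finset.range (b * p)).filter (fun i => ¬ p ∣ i), ((a - b) * p + i) := by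
  set c := a - b with hc
  have hbc : b + c = a := by omega
  set G := ∏ i ∈ (Finset.range (b * p)).filter (fun i => ¬ p ∣ i), (c * p + i) with hG
  set K := p ^ b * p ^ c * Nat.factorial b * Nat.factorial c * Fprod p c with hK
  have hKpos : 0 < K := by
    rw [hK]
    exact Nat.mul_pos (Nat.mul_pos (Nat.mul_pos (Nat.mul_pos (pow_pos hp.pos b)
      (pow_pos hp.pos c)) (Nat.factorial_pos b)) (Nat.factorial_pos c)) Fprod_pos
  have key1 : (a * p).choose (b * p) * Nat.factorial (b * p) * Nat.factorial (c * p)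
      = Nat.factorial (a * p) := by
    have h := Nat.choose_mul_factorial_mul_factorial (Nat.mul_le_mul_right p hba)
    rwa [← Nat.sub_mul, ← hc] at h
  have key2 : a.choose b * Nat.factorial b * Nat.factorial c = Nat.factorial a := by
    have h := Nat.choose_mul_factorial_mul_factorial hba
    rwa [← hc] at h
  have main : (a * p).choose (b * p) * Fprod p b * K = (a.choose b * G) * K := by
    calc (a * p).choose (b * p) * Fprod p b * K
        = (a * p).choose (b * p) * (p ^ b * Nat.factorial b * Fprod p b)
          * (p ^ c * Nat.factorial c * Fprod p c) := by rw [hK]; ring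
    _ = (a * p).choose (b * p) * Nat.factorial (b * p) * Nat.factorial (c * p) := by
        rw [factorial_eq hp b, factorial_eq hp c]
        try ring
    _ = Nat.factorial (a * p) := key1
    _ = p ^ a * Nat.factorial a * Fprod p a := factorial_eq hp a
    _ = p ^ a * Nat.factorial a * (Fprod p c * G) := by
        have h := Fprod_add hp c b
        rw [show c + b = a from by omega] at h
        rw [h, hG]
    _ = p ^ (b + c) * (a.choose b * Nat.factorial b * Nat.factorial c) * (Fprod p c * G) := by
        rw [key2]
        try rw [hbc]
    _ = (a.choose b * G) * K := by rw [pow_add, hK]; ring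
  exact Nat.eq_of_mul_eq_mul_right hKpos main
/-- The key step: going down one power of `p` modulo `p^(3j)`. -/
lemma jacobsthal_step {p : ℕ} (hp : p.Prime) (hp5 : 5 ≤ p) {j : ℕ} (hj : 1 ≤ j)
    (n m : ℕ) (hmn : m ≤ n) :
    (n * p ^ j).choose (m * p ^ j) ≡ (n * p ^ (j - 1)).choose (m * p ^ (j - 1)) [MOD p ^ (3 * j)] := by
  haveI : NeZero (p ^ (3 * j)) := ⟨pow_ne_zero _ hp.pos.ne'⟩
  set R := ZMod (p ^ (3 * j)) with hR
  set a := n * p ^ (j - 1) with ha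
  set b := m * p ^ (j - 1) with hb
  have hba : b ≤ a := Nat.mul_le_mul_right _ hmn
  have hap : a * p = n * p ^ j := by
    rw [ha, mul_assoc, ← pow_succ]
    congr 2
    omega
  have hbp : b * p = m * p ^ j := by
    rw [hb, mul_assoc, ← pow_succ]
    congr 2
    omega
  have hcp : (a - b) * p = (n - m) * p ^ j := by
    rw [ha, hb, ← Nat.sub_mul, mul_assoc, ← pow_succ]
    congr 2
    omega
  have ident := choose_identity (p := p) hp hba
  rw [hap, hbp] at ident
  unfold Fprod at ident
  rw [hbp] at ident
  set I := (Finset.range (m * p ^ j)).filter (fun i => ¬ p ∣ i) with hI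
  have hndvd : ∀ i ∈ I, ¬ p ∣ i := fun i hi => (mem_I hi).2.2
  have hunit : ∀ i ∈ I, IsUnit ((i : ℕ) : R) := fun i hi => isUnit_cast_of_not_dvd hp (hndvd i hi)
  -- cast the identity to R
  have identR : ((n * p ^ j).choose (m * p ^ j) : R) * (∏ i ∈ I, ((i : ℕ) : R))
      = (a.choose b : R) * ∏ i ∈ I, (((a - b : ℕ) : R) * ((p : ℕ) : R) + ((i : ℕ) : R)) := by
    have h0 := congrArg (fun t : ℕ => (t : R)) ident
    simp +zetaDelta only [Nat.cast_mul, Nat.cast_prod, Nat.cast_add] at h0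
    exact h0
  -- the perturbation A
  set A : R := ((n - m : ℕ) : R) * ((p : R)) ^ j with hA
  have hp3 : ((p : R)) ^ (3 * j) = 0 := by
    rw [← Nat.cast_pow]
    exact ZMod.natCast_self _
  have hA3 : A ^ 3 = 0 := by
    have hjp : (((p : R)) ^ j) ^ 3 = ((p : R)) ^ (3 * j) := by rw [← pow_mul]; congr 1; omega
    rw [hA, mul_pow, hjp, hp3, mul_zero]
  have hAcast : ((a - b : ℕ) : R) * ((p : ℕ) : R) = A := by
    have h0 := congrArg (fun t : ℕ => (t : R)) hcp
    simp +zetaDelta only [Nat.cast_mul, Nat.cast_pow] at h0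
    rw [hA]
    exact h0
  -- rewrite the shifted product
  have hshift : (∏ i ∈ I, (((a - b : ℕ) : R) * ((p : ℕ) : R) + ((i : ℕ) : R)))
      = (∏ i ∈ I, ((i : ℕ) : R)) * ∏ i ∈ I, (1 + A * ((i : ℕ) : R)⁻¹) := by
    rw [← Finset.prod_mul_distrib]
    refine Finset.prod_congr rfl ?_
    intro i hi
    have hu := hunit i hi
    rw [hAcast, mul_add, mul_one, mul_comm ((i:ℕ):R) (A * ((i:ℕ):R)⁻¹), mul_assoc,
      ZMod.inv_mul_of_unit _ hu, mul_one, add_comm]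
  -- expand the product
  obtain ⟨E, hE1, hE2⟩ := prod_one_add_expand A hA3 I (fun i => ((i : ℕ) : R)⁻¹)
  set e1 : R := ∑ i ∈ I, ((i : ℕ) : R)⁻¹ with he1
  have h23 : 2 * j ≤ 3 * j := by omega
  have h13 : j ≤ 3 * j := by omega
  -- first sum vanishes strongly
  have he1cast : (ZMod.castHom (pow_dvd_pow p h23) (ZMod (p ^ (2 * j)))) e1 = 0 := by
    rw [he1, map_sum]
    rw [Finset.sum_congr rfl (fun i hi => castHom_natCast_inv hp h23 i (hndvd i hi))]
    exact sum_inv_zero_strong hp hp5 hj m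
  obtain ⟨y, hy⟩ := exists_of_castHom_eq_zero hp h23 e1 he1cast
  have hAe1 : A * e1 = 0 := by
    have hpow : ((p : R)) ^ j * ((p : R)) ^ (2 * j) = 0 := by
      rw [← pow_add]
      have h3 : j + 2 * j = 3 * j := by omega
      rw [h3, hp3]
    rw [hA, hy]
    calc ((n - m : ℕ) : R) * ((p : R)) ^ j * (((p : R)) ^ (2 * j) * y)
        = ((n - m : ℕ) : R) * (((p : R)) ^ j * ((p : R)) ^ (2 * j)) * y := by ring
    _ = 0 := by rw [hpow, mul_zero, zero_mul]
  -- second sum vanishes weakly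
  have hsum1 : (ZMod.castHom (pow_dvd_pow p h13) (ZMod (p ^ j))) e1 = 0 := by
    rw [he1, map_sum]
    rw [Finset.sum_congr rfl (fun i hi => castHom_natCast_inv hp h13 i (hndvd i hi))]
    exact sum_inv_zero hp hp5 hj m
  have hsum2eq : ∑ i ∈ I, ((i : ℕ) : ZMod (p ^ j))⁻¹ ^ 2 = 0 := by
    rw [Finset.sum_congr rfl (fun i _ => pow_two (((i : ℕ) : ZMod (p ^ j))⁻¹))]
    have h0 := sum_inv_sq_zero hp hp5 hj m
    rw [← hI] at h0
    exact h0
  have hE0 : (ZMod.castHom (pow_dvd_pow p h13) (ZMod (p ^ j))) (2 * E) = 0 := by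
    have hπsum2 : (ZMod.castHom (pow_dvd_pow p h13) (ZMod (p ^ j))) (∑ i ∈ I, ((i : ℕ) : R)⁻¹ ^ 2)
        = ∑ i ∈ I, ((i : ℕ) : ZMod (p ^ j))⁻¹ ^ 2 := by
      rw [map_sum]
      exact Finset.sum_congr rfl (fun i hi => by
        rw [map_pow, castHom_natCast_inv hp h13 i (hndvd i hi)])
    calc (ZMod.castHom (pow_dvd_pow p h13) (ZMod (p ^ j))) (2 * E)
        = (ZMod.castHom (pow_dvd_pow p h13) (ZMod (p ^ j))) (e1 ^ 2 - ∑ i ∈ I, ((i : ℕ) : R)⁻¹ ^ 2) := by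
          rw [hE2]
    _ = ((ZMod.castHom (pow_dvd_pow p h13) (ZMod (p ^ j))) e1) ^ 2
          - (ZMod.castHom (pow_dvd_pow p h13) (ZMod (p ^ j))) (∑ i ∈ I, ((i : ℕ) : R)⁻¹ ^ 2) := by
          rw [map_sub, map_pow]
    _ = 0 := by rw [hsum1, hπsum2, hsum2eq]; ring
  obtain ⟨w, hw⟩ := exists_of_castHom_eq_zero hp h13 (2 * E) hE0
  have hAE : A ^ 2 * E = 0 := by
    have hpow : (((p : R)) ^ j) ^ 2 * ((p : R)) ^ j = 0 := by
      rw [← pow_mul, ← pow_add]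
      have h3 : j * 2 + j = 3 * j := by omega
      rw [h3, hp3]
    have h2AE : 2 * (A ^ 2 * E) = 0 := by
      calc 2 * (A ^ 2 * E) = A ^ 2 * (2 * E) := by ring
      _ = A ^ 2 * (((p : R)) ^ j * w) := by rw [hw]
      _ = ((n - m : ℕ) : R) ^ 2 * ((((p : R)) ^ j) ^ 2 * ((p : R)) ^ j) * w := by
          rw [hA]; ring
      _ = 0 := by rw [hpow, mul_zero, zero_mul]
    have h2 : IsUnit (2 : R) := isUnit_two_zmod hp hp5 _
    calc A ^ 2 * E = ((2 : R)⁻¹ * 2) * (A ^ 2 * E) := by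
          rw [ZMod.inv_mul_of_unit _ h2, one_mul]
    _ = (2 : R)⁻¹ * (2 * (A ^ 2 * E)) := by ring
    _ = 0 := by rw [h2AE, mul_zero]
  -- the product is 1
  have hprod1 : (∏ i ∈ I, (1 + A * ((i : ℕ) : R)⁻¹)) = 1 := by
    rw [hE1, hAe1, hAE]
    ring
  -- conclude
  rw [hshift, hprod1, mul_one] at identR
  have hFunit : IsUnit (∏ i ∈ I, ((i : ℕ) : R)) := by
    refine IsUnit.of_mul_eq_one (∏ i ∈ I, ((i : ℕ) : R)⁻¹) ?_
    rw [← Finset.prod_mul_distrib]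
    rw [Finset.prod_congr rfl (fun i hi => ZMod.mul_inv_of_unit _ (hunit i hi))]
    exact Finset.prod_const_one
  have hfinal : ((n * p ^ j).choose (m * p ^ j) : R) = (a.choose b : R) :=
    hFunit.mul_right_cancel identR
  exact (ZMod.natCast_eq_natCast_iff _ _ _).mp hfinal
theorem stmt5 (p : ℕ) (hp : p.Prime) (hp5 : 5 ≤ p) (n m k : ℕ) (hmn : m ≤ n) (hk : 1 ≤ k) :
    (n * p ^ k).choose (m * p ^ k) ≡
      (n * p ^ ((k - 1) / 3)).choose (m * p ^ ((k - 1) / 3)) [MOD p ^ k] := by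
  set e := (k - 1) / 3 with he
  have key : ∀ d, (n * p ^ (e + d)).choose (m * p ^ (e + d)) ≡
      (n * p ^ e).choose (m * p ^ e) [MOD p ^ k] := by
    intro d
    induction d with
    | zero => rfl
    | succ d ih =>
      have hstep := jacobsthal_step hp hp5 (j := e + d + 1) (by omega) n m hmn
      have hdvd : p ^ k ∣ p ^ (3 * (e + d + 1)) := pow_dvd_pow p (by omega)
      have h' := Nat.ModEq.of_dvd hdvd hstep
      have hidx : e + d + 1 - 1 = e + d := by omega
      rw [hidx] at h'
      exact h'.trans ih
  have hek : e + (k - e) = k := by omega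
  have hfin := key (k - e)
  rw [hek] at hfin
  exact hfin
end

section
/- For all nonnegative integers n ≥ m and k ≥ 1, the binomial coefficient C(n·2^k, m·2^k) is congruent to C(n·2^⌊k/2⌋, m·2^⌊k/2⌋) modulo 2^k. -/
open Finset

/-- product of the first `x` odd numbers -/
def fodd (x : ℕ) : ℕ := ∏ i ∈ Finset.range x, (2 * i + 1)

lemma fodd_succ (x : ℕ) : fodd (x + 1) = fodd x * (2 * x + 1) := Finset.prod_range_succ _ _

lemma fodd_odd (x : ℕ) : Odd (fodd x) := by
  induction x with
  | zero => exact odd_one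
  | succ n ih => rw [fodd_succ]; exact ih.mul (odd_two_mul_add_one n)

lemma fact_two_mul (x : ℕ) : (2 * x).factorial = 2 ^ x * x.factorial * fodd x := by
  induction x with
  | zero => simp [fodd]
  | succ n ih =>
    have h : 2 * (n + 1) = (2 * n + 1) + 1 := by ring
    rw [h, Nat.factorial_succ, Nat.factorial_succ, ih, fodd_succ, Nat.factorial_succ]
    ring

lemma choose_id (a b : ℕ) (hba : b ≤ a) :
    (2 * a).choose (2 * b) * (fodd b * fodd (a - b)) = a.choose b * fodd a := by
  set c := a - b with hc
  have hbc : b + c = a := by omega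
  have h2c : 2 * a - 2 * b = 2 * c := by omega
  have e1 : (2 * a).choose (2 * b) * ((2 * b).factorial * (2 * c).factorial)
      = (2 * a).factorial := by
    have := Nat.choose_mul_factorial_mul_factorial (Nat.mul_le_mul_left 2 hba)
    rw [h2c] at this
    rw [← mul_assoc]
    exact this
  have e2 : a.choose b * (b.factorial * c.factorial) = a.factorial := by
    have := Nat.choose_mul_factorial_mul_factorial hba
    rw [← hc] at this
    rw [← mul_assoc]
    exact this
  have hpow : (2:ℕ) ^ b * 2 ^ c = 2 ^ a := by rw [← pow_add, hbc]
  have hpos : 0 < 2 ^ a * (b.factorial * c.factorial) := by positivity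
  apply Nat.eq_of_mul_eq_mul_right hpos
  calc (2 * a).choose (2 * b) * (fodd b * fodd c) * (2 ^ a * (b.factorial * c.factorial))
      = (2 * a).choose (2 * b) * ((2 ^ b * b.factorial * fodd b) *
        (2 ^ c * c.factorial * fodd c)) := by rw [← hpow]; ring
    _ = (2 * a).choose (2 * b) * ((2 * b).factorial * (2 * c).factorial) := by
        rw [fact_two_mul b, fact_two_mul c]
    _ = (2 * a).factorial := e1
    _ = 2 ^ a * a.factorial * fodd a := fact_two_mul a
    _ = 2 ^ a * (a.choose b * (b.factorial * c.factorial)) * fodd a := by rw [e2]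
    _ = a.choose b * fodd a * (2 ^ a * (b.factorial * c.factorial)) := by ring

lemma shift (j d t : ℕ) (ht : 2 ^ j ∣ t) (hd : 2 ^ j ∣ 4 * d) :
    (∏ i ∈ Finset.range (2 * d), (t + (2 * i + 1))) ≡ fodd (2 * d) [MOD 2 ^ (2 * j)] := by
  set N := 2 ^ (2 * j) with hN
  rw [← ZMod.natCast_eq_natCast_iff]
  haveI : NeZero N := ⟨by positivity⟩
  have hT2 : (t : ZMod N) * (t : ZMod N) = 0 := by
    rw [← Nat.cast_mul, ZMod.natCast_eq_zero_iff]
    rw [hN, two_mul, pow_add]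
    exact mul_dvd_mul ht ht
  have hT4d : (t : ZMod N) * ((4 * d : ℕ) : ZMod N) = 0 := by
    rw [← Nat.cast_mul, ZMod.natCast_eq_zero_iff]
    rw [hN, two_mul, pow_add]
    exact mul_dvd_mul ht hd
  push_cast [fodd]
  set T : ZMod N := ((t : ℕ) : ZMod N)
  set g : ℕ → ZMod N := fun i => T + (2 * (i : ZMod N) + 1) with hg
  set g0 : ℕ → ZMod N := fun i => 2 * (i : ZMod N) + 1 with hg0
  have key : ∀ i < d, g i * g (d + (d - 1 - i)) = g0 i * g0 (d + (d - 1 - i)) := by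
    intro i hi
    have hsum : (2 * i + 1) + (2 * (d + (d - 1 - i)) + 1) = 4 * d := by omega
    have hsum' : (2 * (i : ZMod N) + 1) + (2 * ((d + (d - 1 - i) : ℕ) : ZMod N) + 1)
        = ((4 * d : ℕ) : ZMod N) := by
      rw [← hsum]; push_cast; ring
    have expand : g i * g (d + (d - 1 - i)) = g0 i * g0 (d + (d - 1 - i)) +
        T * ((2 * (i : ZMod N) + 1) + (2 * ((d + (d - 1 - i) : ℕ) : ZMod N) + 1)) + T * T := by
      simp only [hg, hg0]; ring
    rw [expand, hsum', hT4d, hT2, add_zero, add_zero]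
  have two_d : 2 * d = d + d := by ring
  calc (∏ i ∈ Finset.range (2 * d), g i)
      = (∏ i ∈ Finset.range d, g i) * ∏ i ∈ Finset.range d, g (d + i) := by
        rw [two_d, Finset.prod_range_add]
    _ = (∏ i ∈ Finset.range d, g i) * ∏ i ∈ Finset.range d, g (d + (d - 1 - i)) := by
        rw [Finset.prod_range_reflect (fun i => g (d + i)) d]
    _ = ∏ i ∈ Finset.range d, (g i * g (d + (d - 1 - i))) := by
        rw [Finset.prod_mul_distrib]
    _ = ∏ i ∈ Finset.range d, (g0 i * g0 (d + (d - 1 - i))) := by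
        exact Finset.prod_congr rfl fun i hi => key i (Finset.mem_range.mp hi)
    _ = (∏ i ∈ Finset.range d, g0 i) * ∏ i ∈ Finset.range d, g0 (d + (d - 1 - i)) := by
        rw [Finset.prod_mul_distrib]
    _ = (∏ i ∈ Finset.range d, g0 i) * ∏ i ∈ Finset.range d, g0 (d + i) := by
        rw [Finset.prod_range_reflect (fun i => g0 (d + i)) d]
    _ = ∏ i ∈ Finset.range (2 * d), g0 i := by rw [two_d, Finset.prod_range_add]

lemma step (j n m : ℕ) (hj : 2 ≤ j) (hmn : m ≤ n) :
    (n * 2 ^ j).choose (m * 2 ^ j) ≡ (n * 2 ^ (j - 1)).choose (m * 2 ^ (j - 1))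
      [MOD 2 ^ (2 * j)] := by
  obtain ⟨e, rfl⟩ : ∃ e, j = e + 1 := ⟨j - 1, by omega⟩
  have he : 1 ≤ e := by omega
  set a := n * 2 ^ e with ha
  set b := m * 2 ^ e with hb
  set c := (n - m) * 2 ^ e with hc
  have hba : b ≤ a := Nat.mul_le_mul_right _ hmn
  have hab : a - b = c := by rw [ha, hb, hc, ← Nat.sub_mul]
  have hbc : b + c = a := by omega
  have h2a : n * 2 ^ (e + 1) = 2 * a := by rw [ha, pow_succ]; ring
  have h2b : m * 2 ^ (e + 1) = 2 * b := by rw [hb, pow_succ]; ring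
  have hsimp : e + 1 - 1 = e := rfl
  rw [h2a, h2b, hsimp]
  -- key congruence : fodd a ≡ fodd b * fodd c
  obtain ⟨d, hd⟩ : ∃ d, c = 2 * d := ⟨(n - m) * 2 ^ (e - 1), by
    rw [hc]; obtain ⟨e', rfl⟩ : ∃ e', e = e' + 1 := ⟨e - 1, by omega⟩
    simp [pow_succ]; ring⟩
  have hfa : fodd a = fodd b * ∏ i ∈ Finset.range c, (2 * b + (2 * i + 1)) := by
    rw [← hbc, fodd, Finset.prod_range_add]
    congr 1
    exact Finset.prod_congr rfl fun i _ => by ring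
  have hshift : (∏ i ∈ Finset.range c, (2 * b + (2 * i + 1))) ≡ fodd c
      [MOD 2 ^ (2 * (e + 1))] := by
    rw [hd]
    apply shift (e + 1) d (2 * b)
    · exact ⟨m, by rw [hb, pow_succ]; ring⟩
    · refine ⟨n - m, ?_⟩
      have : 4 * d = 2 * c := by omega
      rw [this, hc, pow_succ]; ring
  have hmod : fodd a ≡ fodd b * fodd c [MOD 2 ^ (2 * (e + 1))] := by
    rw [hfa]; exact hshift.mul_left (fodd b)
  have hid := choose_id a b hba
  rw [hab] at hid
  have hcong : (2 * a).choose (2 * b) * (fodd b * fodd c) ≡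
      a.choose b * (fodd b * fodd c) [MOD 2 ^ (2 * (e + 1))] := by
    rw [hid]
    exact hmod.mul_left (a.choose b)
  apply Nat.ModEq.cancel_right_of_coprime _ hcong
  have hodd : Odd (fodd b * fodd c) := (fodd_odd b).mul (fodd_odd c)
  have : Nat.Coprime (fodd b * fodd c) 2 := by
    rw [Nat.coprime_two_right]; exact hodd
  have := Nat.Coprime.pow_right (2 * (e + 1)) this
  rwa [Nat.coprime_comm] at this

lemma chain (n m : ℕ) (hmn : m ≤ n) : ∀ s h K, 1 ≤ h → K ≤ 2 * h + 2 →
    (n * 2 ^ (h + s)).choose (m * 2 ^ (h + s)) ≡ (n * 2 ^ h).choose (m * 2 ^ h)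
      [MOD 2 ^ K] := by
  intro s
  induction s with
  | zero => intro h K _ _; rfl
  | succ s ih =>
    intro h K hh hK
    have hstep := step (h + s + 1) n m (by omega) hmn
    have h1 : h + s + 1 - 1 = h + s := rfl
    rw [h1] at hstep
    have hdvd : (2:ℕ) ^ K ∣ 2 ^ (2 * (h + s + 1)) := pow_dvd_pow 2 (by omega)
    have hstep' := hstep.of_dvd hdvd
    have : h + (s + 1) = h + s + 1 := by omega
    rw [this]
    exact hstep'.trans (ih h K hh hK)

theorem stmt6 (n m k : ℕ) (hmn : m ≤ n) (hk : 1 ≤ k) :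
    (n * 2 ^ k).choose (m * 2 ^ k) ≡ (n * 2 ^ (k / 2)).choose (m * 2 ^ (k / 2)) [MOD 2 ^ k] := by
  rcases eq_or_lt_of_le hk with h1 | h2
  · -- k = 1 : Lucas mod 2
    subst h1
    simp only [Nat.div_self, pow_one, Nat.pow_zero, Nat.mul_one] at *
    haveI : Fact (Nat.Prime 2) := ⟨Nat.prime_two⟩
    have := @Choose.choose_modEq_choose_mod_mul_choose_div_nat (n * 2) (m * 2) 2 _
    simpa [Nat.mul_div_cancel, Nat.mul_mod_left] using this
  · have hh : 1 ≤ k / 2 := by omega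
    have hK : k ≤ 2 * (k / 2) + 2 := by omega
    have hs : k / 2 + (k - k / 2) = k := by omega
    have := chain n m hmn (k - k / 2) (k / 2) k hh hK
    rwa [hs] at this
end

section
/- For every integer k ≥ 1 and all nonnegative integers n, m, n₀, m₀ with n₀ < 2 and m₀ < 2, the binomial coefficient C(n·2^k + n₀, m·2^k + m₀) is congruent to C(n·2^⌊k/2⌋, m·2^⌊k/2⌋)·C(n₀, m₀) modulo 2^k. -/
open Polynomial Finset

lemma sum_even_aux {M : Type*} [AddCommMonoid M] (f : ℕ → M) (h : ∀ j, f (2*j+1) = 0) (n : ℕ) :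
    ∑ j ∈ range (2*n), f j = ∑ i ∈ range n, f (2*i) := by
  induction n with
  | zero => simp
  | succ n ih =>
      have : 2 * (n+1) = (2*n + 1) + 1 := by ring
      rw [this, sum_range_succ, sum_range_succ, h, add_zero, sum_range_succ, ih]

lemma coeff_sq (c d : ℕ) :
    ((X^2 + 1 : Polynomial ℕ)^c).coeff d = if d % 2 = 0 then c.choose (d/2) else 0 := by
  rw [add_pow]
  rw [finset_sum_coeff]
  have h1 : ∀ k ∈ range (c+1), ((X^2:Polynomial ℕ)^k * 1^(c-k) * (c.choose k : Polynomial ℕ)).coeff d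
      = if d = 2*k then c.choose k else 0 := by
    intro k _
    rw [one_pow, mul_one, ← pow_mul, mul_comm ((X:Polynomial ℕ)^(2*k)), ← C_eq_natCast, coeff_C_mul,
      coeff_X_pow]
    simp [mul_comm]
  rw [Finset.sum_congr rfl h1]
  by_cases hd : d % 2 = 0
  · obtain ⟨e, rfl⟩ : ∃ e, d = 2*e := ⟨d/2, by omega⟩
    rw [if_pos hd]
    have : (2*e)/2 = e := by omega
    rw [this]
    by_cases he : e ∈ range (c+1)
    · rw [Finset.sum_eq_single_of_mem e he]
      · simp
      · intro b _ hb; exact if_neg (by omega)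
    · rw [Finset.sum_eq_zero, Nat.choose_eq_zero_of_lt (by simp at he; omega)]
      intro b hb; exact if_neg (by simp at he hb ⊢; omega)
  · rw [if_neg hd, Finset.sum_eq_zero]
    intro b _; exact if_neg (by omega)

lemma doubling_identity (a b : ℕ) :
    (2*a).choose (2*b) = ∑ i ∈ range (b+1), 4^i * a.choose (2*i) * ((a - 2*i).choose (b - i)) := by
  -- define f
  set f : ℕ → ℕ := fun j => 2^j * a.choose j *
      (if j ≤ 2*b then (if (2*b - j) % 2 = 0 then (a-j).choose ((2*b-j)/2) else 0) else 0) with hf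
  have key : (2*a).choose (2*b) = ∑ j ∈ range (a+1), f j := by
    have e1 : ((X + 1 : Polynomial ℕ)^(2*a)).coeff (2*b) = (2*a).choose (2*b) :=
      coeff_X_add_one_pow ℕ (2*a) (2*b)
    have e2 : (X + 1 : Polynomial ℕ)^(2*a) = ((2*X) + (X^2+1))^a := by
      rw [pow_mul]; congr 1; ring
    rw [e2, add_pow, finset_sum_coeff] at e1
    rw [← e1]
    apply Finset.sum_congr rfl
    intro j hj
    have : ((2*X:Polynomial ℕ))^j * (X^2+1)^(a-j) * ((a.choose j : ℕ) : Polynomial ℕ)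
        = ((a.choose j * 2^j : ℕ) : Polynomial ℕ) * ((X^2+1)^(a-j) * X^j) := by
      push_cast
      ring
    rw [this, ← C_eq_natCast, coeff_C_mul, coeff_mul_X_pow']
    simp only [mem_range] at hj
    by_cases hjb : j ≤ 2*b
    · rw [if_pos hjb, coeff_sq, hf]
      simp only [if_pos hjb, Nat.cast_id]
      ring
    · rw [if_neg hjb, hf]
      simp [if_neg hjb]
  rw [key]
  -- extend to range (2*(a+b+1))
  have ext1 : ∑ j ∈ range (a+1), f j = ∑ j ∈ range (2*(a+b+1)), f j := by
    apply Finset.sum_subset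
    · apply Finset.range_subset_range.2; omega
    · intro x _ hx
      simp only [mem_range] at hx
      have : a.choose x = 0 := Nat.choose_eq_zero_of_lt (by omega)
      simp [hf, this]
  rw [ext1, sum_even_aux f (by intro j; simp [hf]; intro h1 h2; omega)]
  have ext2 : ∑ i ∈ range (a+b+1), f (2*i) = ∑ i ∈ range (b+1), f (2*i) := by
    refine (Finset.sum_subset (Finset.range_subset_range.2 (by omega)) ?_).symm
    intro x _ hx
    simp only [mem_range] at hx
    have : ¬ (2*x ≤ 2*b) := by omega
    simp [hf, this]
  rw [ext2]
  apply Finset.sum_congr rfl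
  intro i hi
  simp only [mem_range] at hi
  have h1 : 2*i ≤ 2*b := by omega
  have h2 : (2*b - 2*i) % 2 = 0 := by omega
  have h3 : (2*b - 2*i)/2 = b - i := by omega
  simp only [hf, if_pos h1, if_pos h2, h3]
  rw [show (2:ℕ)^(2*i) = 4^i by rw [pow_mul]; norm_num]
  try ring

lemma dvd_descFactorial (n i : ℕ) (hi : 1 ≤ i) : n ∣ n.descFactorial i := by
  induction i with
  | zero => omega
  | succ i ih =>
      rcases Nat.eq_zero_or_pos i with h | h
      · subst h; simp
      · rw [Nat.descFactorial_succ]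
        exact (ih h).mul_left _

lemma xlem (v a b : ℕ) (ha : 2^v ∣ a) (hb : 2^v ∣ b) (hb0 : 0 < b) (hba : b ≤ a) :
    2^(2*v+1) ∣ a.choose b * b * (a - b) := by
  have hab : 2^v ∣ a - b := Nat.dvd_sub ha hb
  have key : a ∣ a.choose b * b := by
    have h := Nat.add_one_mul_choose_eq (a-1) (b-1)
    rw [Nat.sub_add_cancel (by omega), Nat.sub_add_cancel hb0] at h
    exact ⟨(a-1).choose (b-1), by rw [← h]⟩
  by_cases h1 : 2^(v+1) ∣ b
  · have : 2^(2*v+1) ∣ b * (a-b) := by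
      have : (2:ℕ)^(2*v+1) = 2^(v+1) * 2^v := by rw [← pow_add]; ring_nf
      rw [this]; exact mul_dvd_mul h1 hab
    calc 2^(2*v+1) ∣ b * (a-b) := this
      _ ∣ a.choose b * b * (a - b) := by
          rw [mul_assoc]; exact dvd_mul_left _ _
  · by_cases h2 : 2^(v+1) ∣ (a - b)
    · have : 2^(2*v+1) ∣ b * (a-b) := by
        have e : (2:ℕ)^(2*v+1) = 2^v * 2^(v+1) := by rw [← pow_add]; ring_nf
        rw [e]; exact mul_dvd_mul hb h2
      calc 2^(2*v+1) ∣ b * (a-b) := this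
        _ ∣ a.choose b * b * (a - b) := by rw [mul_assoc]; exact dvd_mul_left _ _
    · -- both exactly 2^v : then 2^(v+1) ∣ a
      obtain ⟨b1, hb1⟩ := hb
      obtain ⟨c1, hc1⟩ := hab
      have hpv : (0:ℕ) < 2^v := Nat.pow_pos (by norm_num)
      have hb1odd : b1 % 2 = 1 := by
        rcases Nat.even_or_odd b1 with he | ho
        · exfalso; apply h1
          obtain ⟨t, ht⟩ := he
          exact ⟨t, by rw [hb1, ht, pow_succ]; ring⟩
        · exact Nat.odd_iff.mp ho
      have hc1odd : c1 % 2 = 1 := by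
        rcases Nat.even_or_odd c1 with he | ho
        · exfalso; apply h2
          obtain ⟨t, ht⟩ := he
          exact ⟨t, by rw [hc1, ht, pow_succ]; ring⟩
        · exact Nat.odd_iff.mp ho
      have hA : 2^(v+1) ∣ a := by
        obtain ⟨t, ht⟩ : ∃ t, b1 + c1 = 2*t := ⟨(b1+c1)/2, by omega⟩
        refine ⟨t, ?_⟩
        have h3 : a = b + (a - b) := by omega
        rw [hc1, hb1] at h3
        rw [h3, ← Nat.mul_add, ht, pow_succ]; ring
      have hCb : 2^(v+1) ∣ a.choose b * b := dvd_trans hA key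
      have e : (2:ℕ)^(2*v+1) = 2^(v+1) * 2^v := by rw [← pow_add]; ring_nf
      rw [e]
      exact mul_dvd_mul hCb ⟨c1, hc1⟩

lemma fact_val_lt (i : ℕ) (hi : 1 ≤ i) : (Nat.factorial (2*i)).factorization 2 < 2*i := by
  have h := Nat.emultiplicity_two_factorial_lt (n := 2*i) (by omega)
  have h2 := multiplicity_lt_of_emultiplicity_lt h
  rwa [Nat.multiplicity_eq_factorization Nat.prime_two (Nat.factorial_ne_zero _)] at h2

lemma prod_identity (a b i : ℕ) (hi : 1 ≤ i) (hib : i ≤ b) (hba : b + i ≤ a) :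
    a.choose (2*i) * ((a-2*i).choose (b-i)) * Nat.factorial (2*i)
      = a.choose b * b.descFactorial i * (a-b).descFactorial i := by
  have h2ia : 2*i ≤ a := by omega
  have hbia : b - i ≤ a - 2*i := by omega
  apply Nat.eq_of_mul_eq_mul_right
    (show 0 < Nat.factorial (b-i) * Nat.factorial (a-b-i) from
      Nat.mul_pos (Nat.factorial_pos _) (Nat.factorial_pos _))
  have e1 : a.choose (2*i) * ((a-2*i).choose (b-i)) * Nat.factorial (2*i)
      * (Nat.factorial (b-i) * Nat.factorial (a-b-i)) = Nat.factorial a := by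
    have h3 : a - b - i = a - 2*i - (b - i) := by omega
    calc a.choose (2*i) * ((a-2*i).choose (b-i)) * Nat.factorial (2*i)
        * (Nat.factorial (b-i) * Nat.factorial (a-b-i))
        = (a.choose (2*i) * Nat.factorial (2*i)) *
          ((a-2*i).choose (b-i) * Nat.factorial (b-i) * Nat.factorial (a-2*i - (b-i))) := by
          rw [h3]; ring
      _ = (a.choose (2*i) * Nat.factorial (2*i)) * Nat.factorial (a-2*i) := by
          rw [Nat.choose_mul_factorial_mul_factorial hbia]
      _ = Nat.factorial a := by
          rw [← Nat.choose_mul_factorial_mul_factorial h2ia]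
  have e2 : a.choose b * b.descFactorial i * (a-b).descFactorial i
      * (Nat.factorial (b-i) * Nat.factorial (a-b-i)) = Nat.factorial a := by
    calc a.choose b * b.descFactorial i * (a-b).descFactorial i
        * (Nat.factorial (b-i) * Nat.factorial (a-b-i))
        = a.choose b * (Nat.factorial (b-i) * b.descFactorial i)
          * (Nat.factorial ((a-b)-i) * (a-b).descFactorial i) := by ring
      _ = a.choose b * Nat.factorial b * Nat.factorial (a-b) := by
          rw [Nat.factorial_mul_descFactorial (show i ≤ b from hib),
            Nat.factorial_mul_descFactorial (show i ≤ a - b from by omega)]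
      _ = Nat.factorial a := Nat.choose_mul_factorial_mul_factorial (by omega)
  rw [e1, e2]

lemma term_dvd (v a b i : ℕ) (ha : 2^v ∣ a) (hb : 2^v ∣ b) (hi : 1 ≤ i) (hib : i ≤ b) :
    2^(2*v+2) ∣ 4^i * (a.choose (2*i) * ((a - 2*i).choose (b - i))) := by
  have h4 : (4:ℕ)^i = 2^(2*i) := by rw [pow_mul]; norm_num
  by_cases hiv : v + 1 ≤ i
  · refine dvd_trans ?_ (dvd_mul_right _ _)
    rw [h4]; exact pow_dvd_pow 2 (by omega)
  by_cases hz : a.choose (2*i) * ((a - 2*i).choose (b - i)) = 0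
  · rw [hz, mul_zero]; exact dvd_zero _
  have hC1 : ¬ (a < 2*i) := fun h => hz (by rw [Nat.choose_eq_zero_of_lt h, zero_mul])
  have hC2 : ¬ (a - 2*i < b - i) := fun h => hz (by rw [Nat.choose_eq_zero_of_lt h, mul_zero])
  have hba : b + i ≤ a := by omega
  set P := a.choose (2*i) * ((a - 2*i).choose (b - i)) with hP
  have hid : P * Nat.factorial (2*i)
      = a.choose b * b.descFactorial i * (a-b).descFactorial i := by
    rw [hP, ← prod_identity a b i hi hib hba]
  have hdvd1 : 2^(2*v+1) ∣ P * Nat.factorial (2*i) := by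
    rw [hid]
    obtain ⟨k1, hk1⟩ := dvd_descFactorial b i hi
    obtain ⟨k2, hk2⟩ := dvd_descFactorial (a-b) i hi
    refine dvd_trans (xlem v a b ha hb (by omega) (by omega)) ⟨k1 * k2, ?_⟩
    rw [hk1, hk2]; ring
  set e := (Nat.factorial (2*i)).factorization 2 with he
  have hef : Nat.factorial (2*i) = 2^e * ((Nat.factorial (2*i)) / 2^e) :=
    (Nat.ordProj_mul_ordCompl_eq_self _ 2).symm
  have hodd : ¬ 2 ∣ (Nat.factorial (2*i)) / 2^e :=
    Nat.not_dvd_ordCompl Nat.prime_two (Nat.factorial_ne_zero _)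
  have hcop : Nat.Coprime (2^(2*v+1)) ((Nat.factorial (2*i)) / 2^e) :=
    Nat.Coprime.pow_left _ ((Nat.Prime.coprime_iff_not_dvd Nat.prime_two).mpr hodd)
  have hdvd2 : 2^(2*v+1) ∣ P * 2^e := by
    apply hcop.dvd_of_dvd_mul_right
    rw [mul_assoc, ← hef]
    exact hdvd1
  have helt : e < 2*i := fact_val_lt i hi
  have hdvd3 : 2^(2*v+1-e) ∣ P := by
    rw [show (2:ℕ)^(2*v+1) = 2^(2*v+1-e) * 2^e from by rw [← pow_add]; congr 1; omega] at hdvd2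
    exact (Nat.mul_dvd_mul_iff_right (Nat.pow_pos (n := e) (by norm_num : 0 < 2))).mp hdvd2
  calc (2:ℕ)^(2*v+2) ∣ 2^(2*i) * 2^(2*v+1-e) := by
        rw [← pow_add]; apply pow_dvd_pow; omega
    _ ∣ 4^i * P := by rw [h4]; exact mul_dvd_mul dvd_rfl hdvd3

lemma doubling_congr (v a b : ℕ) (ha : 2^v ∣ a) (hb : 2^v ∣ b) :
    (2*a).choose (2*b) ≡ a.choose b [MOD 2^(2*v+2)] := by
  rw [doubling_identity, Finset.sum_range_succ']
  have h0 : 4^0 * a.choose (2*0) * ((a - 2*0).choose (b - 0)) = a.choose b := by simp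
  rw [h0]
  have hs : (2:ℕ)^(2*v+2) ∣ ∑ i ∈ range b, 4^(i+1) * a.choose (2*(i+1)) * ((a - 2*(i+1)).choose (b - (i+1))) := by
    refine Finset.dvd_sum ?_
    intro i hi
    simp only [mem_range] at hi
    rw [mul_assoc]
    exact term_dvd v a b (i+1) ha hb (by omega) (by omega)
  calc (∑ i ∈ range b, 4^(i+1) * a.choose (2*(i+1)) * ((a - 2*(i+1)).choose (b - (i+1)))) + a.choose b
      ≡ 0 + a.choose b [MOD 2^(2*v+2)] :=
        Nat.ModEq.add_right _ ((Nat.modEq_zero_iff_dvd).mpr hs)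
    _ = a.choose b := zero_add _

lemma chain_s9 (k n m : ℕ) :
    (n*2^k).choose (m*2^k) ≡ (n*2^(k/2)).choose (m*2^(k/2)) [MOD 2^k] := by
  suffices H : ∀ d, k/2 + d ≤ k → (n*2^(k/2+d)).choose (m*2^(k/2+d)) ≡ (n*2^(k/2)).choose (m*2^(k/2)) [MOD 2^k] by
    have h := H (k - k/2) (by omega)
    rwa [show k/2 + (k - k/2) = k from by omega] at h
  intro d
  induction d with
  | zero => intro _; rfl
  | succ d ih =>
      intro hd
      have e : k/2 + (d+1) = (k/2+d)+1 := by omega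
      rw [e]
      have h1 : n*2^(k/2+d+1) = 2*(n*2^(k/2+d)) := by rw [pow_succ]; ring
      have h2 : m*2^(k/2+d+1) = 2*(m*2^(k/2+d)) := by rw [pow_succ]; ring
      rw [h1, h2]
      have hc := doubling_congr (k/2+d) (n*2^(k/2+d)) (m*2^(k/2+d))
        (dvd_mul_left _ _) (dvd_mul_left _ _)
      have hw : (2:ℕ)^k ∣ 2^(2*(k/2+d)+2) := pow_dvd_pow 2 (by omega)
      exact (Nat.ModEq.of_dvd hw hc).trans (ih (by omega))

lemma lemA (k n m : ℕ) (hk : 1 ≤ k) : 2^k ∣ (n*2^k).choose (m*2^k + 1) := by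
  have h := Nat.choose_succ_right_eq (n*2^k) (m*2^k)
  have hsub : n*2^k - m*2^k = (n-m)*2^k := by rw [Nat.sub_mul]
  have hdvd : 2^k ∣ (n*2^k).choose (m*2^k + 1) * (m*2^k+1) := by
    rw [h, hsub]
    exact Dvd.dvd.mul_left (dvd_mul_left _ _) _
  have h2 : (2:ℕ) ∣ 2^k := dvd_pow_self 2 (by omega)
  have hodd : ¬ (2:ℕ) ∣ (m*2^k+1) := by
    rcases h2 with ⟨t, ht⟩
    have hmt : m*2^k = 2*(m*t) := by rw [ht]; ring
    omega
  exact (Nat.Coprime.pow_left k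
    ((Nat.Prime.coprime_iff_not_dvd Nat.prime_two).mpr hodd)).dvd_of_dvd_mul_right hdvd

theorem stmt9 (k n m n0 m0 : ℕ) (hk : 1 ≤ k) (hn0 : n0 < 2) (hm0 : m0 < 2) :
    (n * 2 ^ k + n0).choose (m * 2 ^ k + m0) ≡
      (n * 2 ^ (k / 2)).choose (m * 2 ^ (k / 2)) * n0.choose m0 [MOD 2 ^ k] := by
  have hchain := chain_s9 k n m
  have h2k : (2:ℕ) ≤ 2^k := by
    calc (2:ℕ) = 2^1 := (pow_one 2).symm
      _ ≤ 2^k := Nat.pow_le_pow_right (by norm_num) hk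
  interval_cases n0 <;> interval_cases m0
  · simpa using hchain
  · simpa using (Nat.modEq_zero_iff_dvd).mpr (lemA k n m hk)
  · -- n0 = 1, m0 = 0
    rcases Nat.eq_zero_or_pos m with rfl | hm
    · simp
      rfl
    · have hM : m*2^k = (m*2^k - 1) + 1 := by
        have : 0 < m * 2^k := Nat.mul_pos hm (Nat.pow_pos (n := k) (by norm_num : 0 < 2))
        omega
      have hdvdM' : 2^k ∣ (n*2^k).choose (m*2^k - 1) := by
        by_cases hmn : m ≤ n
        · have hle : m*2^k ≤ n*2^k := Nat.mul_le_mul_right _ hmn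
          have hM'le : m*2^k - 1 ≤ n*2^k := by omega
          rw [← Nat.choose_symm hM'le]
          have hrw : n*2^k - (m*2^k - 1) = (n-m)*2^k + 1 := by
            have h1 : (n-m)*2^k = n*2^k - m*2^k := by rw [Nat.sub_mul]
            omega
          rw [hrw]
          exact lemA k n (n-m) hk
        · have hlt : n*2^k < m*2^k - 1 := by
            have : (n+1)*2^k ≤ m*2^k := Nat.mul_le_mul_right _ (by omega)
            have : n*2^k + 2^k ≤ m*2^k := by rw [Nat.add_mul] at this; omega
            omega
          rw [Nat.choose_eq_zero_of_lt hlt]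
          exact dvd_zero _
      rw [add_zero, hM, Nat.choose_succ_succ, show Nat.choose 1 0 = 1 from rfl, mul_one]
      calc (n*2^k).choose (m*2^k - 1) + (n*2^k).choose (m*2^k - 1 + 1)
          ≡ 0 + (n*2^k).choose (m*2^k - 1 + 1) [MOD 2^k] :=
            Nat.ModEq.add_right _ ((Nat.modEq_zero_iff_dvd).mpr hdvdM')
        _ = (n*2^k).choose (m*2^k - 1 + 1) := zero_add _
        _ ≡ (n*2^(k/2)).choose (m*2^(k/2)) [MOD 2^k] := by rw [← hM]; exact hchain
  · -- n0 = 1, m0 = 1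
    rw [Nat.choose_succ_succ, show Nat.choose 1 1 = 1 from rfl, mul_one]
    calc (n*2^k).choose (m*2^k) + (n*2^k).choose (m*2^k + 1)
        ≡ (n*2^k).choose (m*2^k) + 0 [MOD 2^k] :=
          Nat.ModEq.add_left _ ((Nat.modEq_zero_iff_dvd).mpr (lemA k n m hk))
      _ = (n*2^k).choose (m*2^k) := add_zero _
      _ ≡ (n*2^(k/2)).choose (m*2^(k/2)) [MOD 2^k] := hchain
end

section
/- For all nonnegative integers n ≥ m with n ≥ 1, the binomial coefficient C(2n, 2m) is congruent to (−1)^m · C(n, m) modulo 2^(2·ord₂(n)+1), where ord₂(n) is the 2-adic valuation of n. -/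
open Finset

/-- `cc j = 2j+1`, the j-th odd number. -/
def cc (j : ℕ) : ℤ := 2 * j + 1

/-- Product of the first m odd numbers. -/
def PP (m : ℕ) : ℤ := ∏ j ∈ range m, cc j

/-- `SS m = ∑_{i<m} ∏_{j<m, j≠i} (2j+1)`, written without `erase`. -/
def SS (m : ℕ) : ℤ :=
  ∑ i ∈ range m, (∏ j ∈ range i, cc j) * ∏ j ∈ Ico (i + 1) m, cc j

/-- `QQ n m = ∏_{j<m} (2n - (2j+1))`. -/
def QQ (n m : ℕ) : ℤ := ∏ j ∈ range m, (2 * n - cc j)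

lemma PP_succ (m : ℕ) : PP (m + 1) = PP m * cc m := by
  simp [PP, prod_range_succ]

lemma QQ_succ (n m : ℕ) : QQ n (m + 1) = QQ n m * (2 * n - cc m) := by
  simp [QQ, prod_range_succ]

lemma SS_succ (m : ℕ) : SS (m + 1) = SS m * cc m + PP m := by
  rw [SS, sum_range_succ]
  have h1 : ∀ i ∈ range m,
      (∏ j ∈ range i, cc j) * ∏ j ∈ Ico (i + 1) (m + 1), cc j
        = ((∏ j ∈ range i, cc j) * ∏ j ∈ Ico (i + 1) m, cc j) * cc m := by
    intro i hi
    have him : i < m := mem_range.mp hi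
    rw [prod_Ico_succ_top (by omega : i + 1 ≤ m)]
    ring
  rw [sum_congr rfl h1, ← sum_mul]
  simp [SS, PP]

lemma prod_neg_pow {R : Type*} [CommRing R] (s : Finset ℕ) (f : ℕ → R) :
    ∏ j ∈ s, -f j = (-1) ^ s.card * ∏ j ∈ s, f j := by
  calc ∏ j ∈ s, -f j = ∏ j ∈ s, (-1 : R) * f j := by
        refine prod_congr rfl fun j _ => by ring
    _ = (∏ _j ∈ s, (-1 : R)) * ∏ j ∈ s, f j := prod_mul_distrib
    _ = (-1) ^ s.card * ∏ j ∈ s, f j := by rw [prod_const]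

lemma PP_odd (m : ℕ) : Odd (PP m) := by
  induction m with
  | zero => simp [PP]
  | succ m ih =>
      rw [PP_succ]
      exact ih.mul ⟨(m : ℤ), by rw [cc]⟩

/-- Key combinatorial identity:
`C(2n,2m) * ∏_{j<m}(2j+1) = C(n,m) * ∏_{j<m}(2n-(2j+1))`. -/
lemma key_identity (n : ℕ) : ∀ m : ℕ, m ≤ n →
    ((2 * n).choose (2 * m) : ℤ) * PP m = (n.choose m : ℤ) * QQ n m := by
  intro m
  induction m with
  | zero => simp [PP, QQ]
  | succ m ih =>
      intro hm
      have hmn : m ≤ n := by omega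
      have hIH := ih hmn
      have hne : ((2 * (m : ℤ) + 1) * (2 * m + 2)) ≠ 0 := by positivity
      refine mul_left_cancel₀ hne ?_
      have hA : ((2 * n).choose (2 * m + 2) : ℤ) * (2 * m + 2)
          = ((2 * n).choose (2 * m + 1) : ℤ) * (2 * n - (2 * m + 1)) := by
        have h := Nat.choose_succ_right_eq (2 * n) (2 * m + 1)
        zify [show 2 * m + 1 ≤ 2 * n by omega] at h
        linear_combination h
      have hB : ((2 * n).choose (2 * m + 1) : ℤ) * (2 * m + 1)
          = ((2 * n).choose (2 * m) : ℤ) * (2 * n - 2 * m) := by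
        have h := Nat.choose_succ_right_eq (2 * n) (2 * m)
        zify [show 2 * m ≤ 2 * n by omega] at h
        linear_combination h
      have hC : (n.choose (m + 1) : ℤ) * (m + 1)
          = (n.choose m : ℤ) * (n - m) := by
        have h := Nat.choose_succ_right_eq n m
        zify [hmn] at h
        linear_combination h
      have h2 : (2 : ℕ) * (m + 1) = 2 * m + 2 := by ring
      rw [h2, PP_succ, QQ_succ]
      simp only [cc]
      linear_combination ((2 * (m : ℤ) + 1) ^ 2 * PP m) * hA
        + ((2 * (m : ℤ) + 1) * (2 * n - 2 * m - 1) * PP m) * hB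
        + ((2 * (n : ℤ) - 2 * m) * (2 * n - 2 * m - 1) * (2 * m + 1)) * hIH
        - (2 * (2 * (m : ℤ) + 1) * (2 * n - 2 * m - 1) * QQ n m) * hC

/-- First-order expansion of `QQ n m` in powers of `2n`. -/
lemma QQ_expand (n : ℕ) : ∀ m : ℕ, ∃ K : ℤ,
    QQ n m = (-1) ^ m * (PP m - 2 * n * SS m) + 4 * n ^ 2 * K := by
  intro m
  induction m with
  | zero => exact ⟨0, by simp [QQ, PP, SS]⟩
  | succ m ih =>
      obtain ⟨K, hK⟩ := ih
      refine ⟨(-1) ^ (m + 1) * SS m + K * (2 * n - cc m), ?_⟩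
      rw [QQ_succ, hK, PP_succ, SS_succ, cc]
      ring

/-- The reversal congruence: `2^(v₂(m)) ∣ SS m`. -/
lemma SS_dvd (m : ℕ) : (2 : ℤ) ^ (m.factorization 2) ∣ SS m := by
  rcases Nat.even_or_odd m with hme | hmo
  swap
  · have : m.factorization 2 = 0 := by
      rcases Nat.eq_zero_or_pos m with h | h
      · simp [h]
      · exact Nat.factorization_eq_zero_of_not_dvd (by
          intro h2
          exact (Nat.not_even_iff_odd.mpr hmo) (even_iff_two_dvd.mpr h2))
    simp [this]
  rcases Nat.eq_zero_or_pos m with h0 | h0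
  · simp [h0, SS]
  set a := m.factorization 2 with ha
  set R := ZMod (2 ^ (a + 1)) with hR
  have hdvd2m : ((2 ^ (a + 1) : ℕ) : ℤ) ∣ (2 * (m : ℤ)) := by
    have h1 : (2 : ℕ) ^ a ∣ m := Nat.ordProj_dvd m 2
    have h2 : (2 : ℕ) ^ (a + 1) ∣ 2 * m := by
      rw [pow_succ, mul_comm ((2:ℕ)^a) 2]
      exact mul_dvd_mul_left 2 h1
    exact_mod_cast Int.natCast_dvd_natCast.mpr h2
  have h2m0 : ((2 * (m : ℤ) : ℤ) : R) = 0 :=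
    (ZMod.intCast_zmod_eq_zero_iff_dvd (2 * (m:ℤ)) (2 ^ (a+1))).mpr hdvd2m
  have hccR : ∀ j < m, ((cc (m - 1 - j) : ℤ) : R) = -((cc j : ℤ) : R) := by
    intro j hj
    have hnat : ((m - 1 - j : ℕ) : ℤ) = (m : ℤ) - 1 - j := by
      have h1 : j ≤ m - 1 := by omega
      push_cast [Nat.cast_sub (by omega : (1:ℕ) ≤ m), Nat.cast_sub h1]
      ring
    have hz : (cc (m - 1 - j) : ℤ) = 2 * (m:ℤ) - cc j := by
      rw [cc, cc, hnat]; ring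
    rw [hz, Int.cast_sub, h2m0, zero_sub]
  have hrev : ((SS m : ℤ) : R) = (-1) ^ (m - 1) * ((SS m : ℤ) : R) := by
    have hcast : ((SS m : ℤ) : R)
        = ∑ i ∈ range m, (∏ j ∈ range i, ((cc j : ℤ) : R))
            * ∏ j ∈ Ico (i + 1) m, ((cc j : ℤ) : R) := by
      rw [SS, Int.cast_sum]; refine sum_congr rfl fun i _ => ?_; rw [Int.cast_mul, Int.cast_prod, Int.cast_prod]
    have hterm : ∀ i ∈ range m,
        (∏ j ∈ range (m - 1 - i), ((cc j : ℤ) : R))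
          * ∏ j ∈ Ico (m - 1 - i + 1) m, ((cc j : ℤ) : R)
        = (-1) ^ (m - 1) * ((∏ j ∈ range i, ((cc j : ℤ) : R))
            * ∏ j ∈ Ico (i + 1) m, ((cc j : ℤ) : R)) := by
      intro i hi
      have him : i < m := mem_range.mp hi
      have hfix : m - 1 - i + 1 = m - i := by omega
      have hp1 : (∏ j ∈ range (m - 1 - i), ((cc j : ℤ) : R))
          = (-1) ^ (m - 1 - i) * ∏ j ∈ Ico (i + 1) m, ((cc j : ℤ) : R) := by
        have hreflect : (∏ j ∈ Ico (i + 1) m, ((cc (m - 1 - j) : ℤ) : R))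
            = ∏ j ∈ Ico (m - 1 + 1 - m) (m - 1 + 1 - (i + 1)), ((cc j : ℤ) : R) :=
          prod_Ico_reflect (fun j => ((cc j : ℤ) : R)) (i + 1) (m := m) (n := m - 1) (by omega)
        have h1 : (∏ j ∈ Ico (i + 1) m, ((cc j : ℤ) : R))
            = ∏ j ∈ Ico (i + 1) m, (-(((cc (m - 1 - j) : ℤ)) : R)) := by
          refine prod_congr rfl fun j hj => ?_
          have hjm : j < m := (mem_Ico.mp hj).2
          have h := hccR (m - 1 - j) (by omega)
          have hjj : m - 1 - (m - 1 - j) = j := by omega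
          rw [hjj] at h
          rw [h]
        rw [h1, prod_neg_pow _ _, hreflect]
        have hcard : (Ico (i + 1) m).card = m - 1 - i := by
          rw [Nat.card_Ico]; omega
        have hico : Ico (m - 1 + 1 - m) (m - 1 + 1 - (i + 1)) = range (m - 1 - i) := by
          have e1 : m - 1 + 1 - m = 0 := by omega
          have e2 : m - 1 + 1 - (i + 1) = m - 1 - i := by omega
          rw [e1, e2, Nat.Ico_zero_eq_range]
        rw [hcard, hico, ← mul_assoc, ← pow_add,
          Even.neg_one_pow ⟨m - 1 - i, rfl⟩, one_mul]
      have hp2 : (∏ j ∈ Ico (m - 1 - i + 1) m, ((cc j : ℤ) : R))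
          = (-1) ^ i * ∏ j ∈ range i, ((cc j : ℤ) : R) := by
        rw [hfix]
        have hreflect : (∏ j ∈ Ico (m - i) m, ((cc (m - 1 - j) : ℤ) : R))
            = ∏ j ∈ Ico (m - 1 + 1 - m) (m - 1 + 1 - (m - i)), ((cc j : ℤ) : R) :=
          prod_Ico_reflect (fun j => ((cc j : ℤ) : R)) (m - i) (m := m) (n := m - 1) (by omega)
        have h1 : (∏ j ∈ Ico (m - i) m, ((cc j : ℤ) : R))
            = ∏ j ∈ Ico (m - i) m, (-(((cc (m - 1 - j) : ℤ)) : R)) := by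
          refine prod_congr rfl fun j hj => ?_
          have hjm : j < m := (mem_Ico.mp hj).2
          have h := hccR (m - 1 - j) (by omega)
          have hjj : m - 1 - (m - 1 - j) = j := by omega
          rw [hjj] at h
          rw [h]
        rw [h1, prod_neg_pow _ _, hreflect]
        have hcard : (Ico (m - i) m).card = i := by rw [Nat.card_Ico]; omega
        have hico : Ico (m - 1 + 1 - m) (m - 1 + 1 - (m - i)) = range i := by
          have e1 : m - 1 + 1 - m = 0 := by omega
          have e2 : m - 1 + 1 - (m - i) = i := by omega
          rw [e1, e2, Nat.Ico_zero_eq_range]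
        rw [hcard, hico]
      rw [hp1, hp2]
      rw [show (-1 : R) ^ (m - 1) = (-1) ^ (m - 1 - i) * (-1) ^ i by
        rw [← pow_add]; congr 1; omega]
      ring
    conv_lhs => rw [hcast, ← sum_range_reflect]
    rw [sum_congr rfl hterm, ← mul_sum, ← hcast]
  have hodd : Odd (m - 1) := by
    rcases hme with ⟨k, hk⟩
    exact ⟨k - 1, by omega⟩
  rw [hodd.neg_one_pow] at hrev
  have h2S : ((2 * SS m : ℤ) : R) = 0 := by
    push_cast
    rw [two_mul, Int.cast_add]
    nth_rewrite 2 [hrev]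
    ring
  have hd : ((2 ^ (a + 1) : ℕ) : ℤ) ∣ 2 * SS m :=
    (ZMod.intCast_zmod_eq_zero_iff_dvd _ _).mp h2S
  have heq : ((2 ^ (a + 1) : ℕ) : ℤ) = 2 * 2 ^ a := by push_cast [pow_succ]; ring
  rw [heq] at hd
  exact (mul_dvd_mul_iff_left (by norm_num : (2:ℤ) ≠ 0)).mp hd

/-- `2^(v₂(n)) ∣ C(n,m) * SS m` for `m ≤ n`, `n ≥ 1`. -/
lemma choose_SS_dvd (n m : ℕ) (hmn : m ≤ n) (hn : 1 ≤ n) :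
    (2 : ℤ) ^ (n.factorization 2) ∣ (n.choose m : ℤ) * SS m := by
  rcases Nat.eq_zero_or_pos m with h0 | hm1
  · subst h0; simp [SS]
  set v := n.factorization 2
  set a := m.factorization 2 with ha
  have hkey : (n : ℤ) ∣ (m : ℤ) * n.choose m := by
    have h := Nat.add_one_mul_choose_eq (n - 1) (m - 1)
    rw [(by omega : n - 1 + 1 = n), (by omega : m - 1 + 1 = m)] at h
    have h'' : m * n.choose m = n * ((n - 1).choose (m - 1)) :=
      (mul_comm m _).trans h.symm
    exact ⟨((n - 1).choose (m - 1) : ℤ), by exact_mod_cast h''⟩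
  have h2v : (2 : ℤ) ^ v ∣ (m : ℤ) * n.choose m := by
    have h1 : ((2 ^ v : ℕ) : ℤ) ∣ (n : ℤ) := Int.natCast_dvd_natCast.mpr (Nat.ordProj_dvd n 2)
    exact dvd_trans (by exact_mod_cast h1) hkey
  set b := m / 2 ^ a with hb
  have hmb : (m : ℤ) = 2 ^ a * b := by
    have h := Nat.ordProj_mul_ordCompl_eq_self m 2
    exact_mod_cast (congrArg (Nat.cast (R := ℤ)) h).symm
  have hbodd : ¬ (2 : ℤ) ∣ (b : ℤ) := by
    have h := Nat.not_dvd_ordCompl Nat.prime_two (by omega : m ≠ 0)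
    intro h2b
    exact h (by exact_mod_cast h2b)
  have hcop : IsCoprime ((2:ℤ) ^ v) (b : ℤ) := by
    refine IsCoprime.pow_left ?_
    rcases Int.even_or_odd (b : ℤ) with he | ho
    · exact absurd he.two_dvd hbodd
    · obtain ⟨k, hk⟩ := ho
      exact ⟨-k, 1, by rw [hk]; ring⟩
  have h2v' : (2 : ℤ) ^ v ∣ (b : ℤ) * (2 ^ a * (n.choose m : ℤ)) := by
    have he : (m : ℤ) * n.choose m = (b : ℤ) * (2 ^ a * (n.choose m : ℤ)) := by
      rw [hmb]; ring
    rwa [he] at h2v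
  have h2v'' : (2 : ℤ) ^ v ∣ 2 ^ a * (n.choose m : ℤ) :=
    hcop.dvd_of_dvd_mul_left h2v'
  obtain ⟨s, hs⟩ := SS_dvd m
  calc (2 : ℤ) ^ v ∣ 2 ^ a * (n.choose m : ℤ) := h2v''
    _ ∣ (n.choose m : ℤ) * SS m := ⟨s, by rw [hs, ← ha]; ring⟩

theorem stmt11 (n m : ℕ) (hmn : m ≤ n) (hn : 1 ≤ n) :
    ((2 * n).choose (2 * m) : ℤ) ≡ (-1) ^ m * n.choose m
      [ZMOD ((2 : ℤ) ^ (2 * n.factorization 2 + 1))] := by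
  set v := n.factorization 2 with hv
  have h2n : (2 : ℤ) ^ (v + 1) ∣ 2 * n := by
    have h1 : ((2 ^ v : ℕ) : ℤ) ∣ (n : ℤ) := Int.natCast_dvd_natCast.mpr (Nat.ordProj_dvd n 2)
    rw [pow_succ, mul_comm ((2:ℤ)^v) 2]
    exact mul_dvd_mul_left 2 (by exact_mod_cast h1)
  obtain ⟨K, hK⟩ := QQ_expand n m
  have hid := key_identity n m hmn
  have hcs := choose_SS_dvd n m hmn hn
  have hmain : (2 : ℤ) ^ (2 * v + 1)
      ∣ (((2 * n).choose (2 * m) : ℤ) - (-1) ^ m * n.choose m) * PP m := by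
    have hthis : ((2 * n).choose (2 * m) : ℤ) * PP m = (n.choose m : ℤ)
        * ((-1) ^ m * (PP m - 2 * n * SS m) + 4 * n ^ 2 * K) := by
      rw [← hK]; exact hid
    have hexp : (((2 * n).choose (2 * m) : ℤ) - (-1) ^ m * n.choose m) * PP m
        = (-1) ^ (m + 1) * ((2 * n) * ((n.choose m : ℤ) * SS m))
          + ((n.choose m : ℤ) * K) * (4 * n ^ 2) := by
      linear_combination hthis
    rw [hexp]
    refine dvd_add ?_ ?_
    · have h1 : (2:ℤ) ^ (2 * v + 1) ∣ (2 * n) * ((n.choose m : ℤ) * SS m) := by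
        have h := mul_dvd_mul h2n hcs
        rwa [show (2:ℤ) ^ (v + 1) * 2 ^ v = 2 ^ (2 * v + 1) by
          rw [← pow_add]; congr 1; omega] at h
      exact Dvd.dvd.mul_left h1 _
    · have h2 : (2:ℤ) ^ (2 * v + 1) ∣ 4 * (n:ℤ) ^ 2 := by
        have h := mul_dvd_mul h2n h2n
        rw [show (2 * (n:ℤ)) * (2 * n) = 4 * n ^ 2 by ring] at h
        calc (2:ℤ) ^ (2 * v + 1) ∣ 2 ^ (v + 1) * 2 ^ (v + 1) := by
              rw [← pow_add]; exact pow_dvd_pow 2 (by omega)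
          _ ∣ 4 * (n:ℤ) ^ 2 := h
      exact Dvd.dvd.mul_left h2 _
  have hcop : IsCoprime ((2:ℤ) ^ (2 * v + 1)) (PP m) := by
    refine IsCoprime.pow_left ?_
    obtain ⟨k, hk⟩ := PP_odd m
    exact ⟨-k, 1, by rw [hk]; ring⟩
  have hdvd : (2 : ℤ) ^ (2 * v + 1)
      ∣ ((2 * n).choose (2 * m) : ℤ) - (-1) ^ m * n.choose m :=
    hcop.dvd_of_dvd_mul_right hmain
  refine Int.modEq_iff_dvd.mpr ?_
  rw [show ((-1:ℤ)) ^ m * n.choose m - (2 * n).choose (2 * m)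
      = -((((2 * n).choose (2 * m) : ℤ)) - (-1) ^ m * n.choose m) by ring]
  exact dvd_neg.mpr hdvd
end
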